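/- arXiv:2312.00893 — 2 statements merged into one kernel-verified Lean document; each statement's English description precedes it below -/
import Mathlib

section
/- Let X be a space with Property (T). Then there exist a matrix A in (A_X^+)_1 and a real number δ with 0 ≤ δ < 1 such that for every representation π of ℂ_u[X] on a complex Hilbert space H, denoting by p_π the orthogonal projection of H onto the subspace H^π of invariant vectors, one has ‖π(A^k) − p_π‖ ≤ δ^k for every integer k ≥ 1. (In particular, the powers A^k form a sequence in (A_X^+)_1 which converges, uniformly over all representations, to the Kazhdan projection.) -/
open scoped ENNReal Classical

noncomputable section

namespace GeomPropT

variable {X : Type*}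

/-- The tube of diameter `R` in `X × X`. -/
def Tube (X : Type*) [EMetricSpace X] (R : ℝ≥0∞) : Set (X × X) :=
  {p : X × X | edist p.1 p.2 ≤ R}

/-- A subset of `X × X` is controlled if it is contained in a tube of finite diameter. -/
def Controlled [EMetricSpace X] (E : Set (X × X)) : Prop :=
  ∃ R : ℝ≥0∞, R < ⊤ ∧ E ⊆ Tube X R

/-- `X` has bounded geometry if balls of any given finite radius have uniformly
bounded cardinality. -/
def BoundedGeometry (X : Type*) [EMetricSpace X] : Prop :=
  ∀ R : ℝ≥0∞, R < ⊤ → ∃ N : ℕ, ∀ x : X,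
    {y : X | edist x y ≤ R}.Finite ∧ {y : X | edist x y ≤ R}.ncard ≤ N

/-- Composition of subsets of `X × X`. -/
def compRel (E F : Set (X × X)) : Set (X × X) :=
  {p : X × X | ∃ z : X, (p.1, z) ∈ E ∧ (z, p.2) ∈ F}

/-- `compPow E n` is the `(n+1)`-fold composition `E^{∘(n+1)}`. -/
def compPow (E : Set (X × X)) : ℕ → Set (X × X)
  | 0 => E
  | n + 1 => compRel E (compPow E n)

/-- A controlled set is generating if every controlled set is contained in some
iterated composition of it. -/
def Generating [EMetricSpace X] (E : Set (X × X)) : Prop :=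
  Controlled E ∧ ∀ F : Set (X × X), Controlled F → ∃ n : ℕ, F ⊆ compPow E n

/-- `X` is monogenic if it admits a controlled generating set. -/
def Monogenic (X : Type*) [EMetricSpace X] : Prop :=
  ∃ E : Set (X × X), Generating E

/-- A "space": bounded geometry, monogenic, with at most countably many coarse
components. -/
structure IsSpace (X : Type*) [EMetricSpace X] : Prop where
  boundedGeometry : BoundedGeometry X
  monogenic : Monogenic X
  countableComponents : Set.Countable {C : Set X | ∃ x : X, C = {y : X | edist x y < ⊤}}

/-- The support of a matrix. -/
def matSupport (T : X → X → ℂ) : Set (X × X) := {p : X × X | T p.1 p.2 ≠ 0}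

/-- Membership in `ℂ_u[X]`: uniformly bounded entries and controlled support. -/
def CuElem [EMetricSpace X] (T : X → X → ℂ) : Prop :=
  (∃ M : ℝ, ∀ x y : X, ‖T x y‖ ≤ M) ∧ Controlled (matSupport T)

/-- The identity matrix. -/
def matOne : X → X → ℂ := fun x y => if x = y then 1 else 0

/-- Matrix multiplication. -/
def matMul (T S : X → X → ℂ) : X → X → ℂ := fun x y => ∑' z : X, T x z * S z y

/-- Matrix adjoint. -/
def matStar (T : X → X → ℂ) : X → X → ℂ := fun x y => starRingEnd ℂ (T y x)

/-- Matrix powers. -/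
def matPow (A : X → X → ℂ) : ℕ → X → X → ℂ
  | 0 => matOne
  | n + 1 => matMul A (matPow A n)

/-- A function `f ∈ ℓ∞(X)` viewed as a diagonal matrix. -/
def diag (f : X → ℂ) : X → X → ℂ := fun x y => if x = y then f x else 0

/-- The matrix of a partial translation: a `{0,1}`-matrix with at most one `1` in
each row and each column, and controlled support. -/
def IsPartialTranslation [EMetricSpace X] (v : X → X → ℂ) : Prop :=
  (∀ x y : X, v x y = 0 ∨ v x y = 1) ∧
  (∀ x y y' : X, v x y = 1 → v x y' = 1 → y = y') ∧
  (∀ x x' y : X, v x y = 1 → v x' y = 1 → x = x') ∧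
  Controlled (matSupport v)

/-- Membership in `S_X`: finite propagation permutation matrices. -/
def IsPermMatrix [EMetricSpace X] (A : X → X → ℂ) : Prop :=
  (∀ x y : X, A x y = 0 ∨ A x y = 1) ∧
  (∀ x : X, ∃! y : X, A x y = 1) ∧
  (∀ y : X, ∃! x : X, A x y = 1) ∧
  Controlled (matSupport A)

/-- Membership in `A_X` with common row/column sum `c`. -/
def MemAX [EMetricSpace X] (A : X → X → ℂ) (c : ℂ) : Prop :=
  CuElem A ∧ ∀ x : X, HasSum (fun y => A x y) c ∧ HasSum (fun y => A y x) c

variable {H : Type*} [NormedAddCommGroup H] [InnerProductSpace ℂ H]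

/-- A representation of `ℂ_u[X]`: a unital `*`-homomorphism into `B(H)`. -/
structure IsRepresentation [EMetricSpace X] [CompleteSpace H]
    (π : (X → X → ℂ) → (H →L[ℂ] H)) : Prop where
  map_one : π matOne = 1
  map_add : ∀ T S : X → X → ℂ, CuElem T → CuElem S → π (T + S) = π T + π S
  map_smul : ∀ (c : ℂ) (T : X → X → ℂ), CuElem T → π (c • T) = c • π T
  map_mul : ∀ T S : X → X → ℂ, CuElem T → CuElem S → π (matMul T S) = π T * π S
  map_star : ∀ T : X → X → ℂ, CuElem T → π (matStar T) = ContinuousLinearMap.adjoint (π T)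

/-- The subspace `H^π` of invariant vectors. -/
def invariantSubmodule [EMetricSpace X] (π : (X → X → ℂ) → (H →L[ℂ] H)) :
    Submodule ℂ H where
  carrier := {ξ : H | ∀ v : X → X → ℂ, IsPartialTranslation v →
    π v ξ = π (matMul v (matStar v)) ξ}
  add_mem' := by
    intro a b ha hb v hv
    simp only [map_add, ha v hv, hb v hv]
  zero_mem' := by
    intro v hv
    simp
  smul_mem' := by
    intro c ξ hξ v hv
    simp only [map_smul, hξ v hv]

/-- `p` is the orthogonal projection onto `S`. -/
def IsOrthoProjOnto (p : H →L[ℂ] H) (S : Submodule ℂ H) : Prop :=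
  ∀ ξ : H, p ξ ∈ S ∧ ξ - p ξ ∈ Sᗮ

/-- Geometric Property (T). -/
def HasPropertyT (X : Type*) [EMetricSpace X] : Prop :=
  ∀ E : Set (X × X), Generating E →
    ∃ c : ℝ, 0 < c ∧
      ∀ (H : Type) [NormedAddCommGroup H] [InnerProductSpace ℂ H] [CompleteSpace H]
        (π : (X → X → ℂ) → (H →L[ℂ] H)), IsRepresentation π →
        ∀ ξ ∈ (invariantSubmodule π)ᗮ,
          ∃ v : X → X → ℂ, IsPartialTranslation v ∧ matSupport v ⊆ E ∧
            c * ‖ξ‖ ≤ ‖π v ξ - π (matMul v (matStar v)) ξ‖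

/-- Bounded functions (elements of `ℓ∞(X)`). -/
def BddFun (f : X → ℂ) : Prop := ∃ M : ℝ, ∀ x : X, ‖f x‖ ≤ M

/-- `f ∘ t`, extended by `0`, where `t` is the partial translation with matrix `v`. -/
def translateFun (v : X → X → ℂ) (f : X → ℂ) : X → ℂ := fun y => ∑' x : X, v x y * f x

/-- An invariant mean on `ℓ∞(X)`: a positive unital linear functional invariant
under partial translations. -/
def IsInvariantMean [EMetricSpace X] (φ : (X → ℂ) → ℂ) : Prop :=
  (∀ f g : X → ℂ, BddFun f → BddFun g → φ (f + g) = φ f + φ g) ∧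
  (∀ (c : ℂ) (f : X → ℂ), BddFun f → φ (c • f) = c * φ f) ∧
  φ (fun _ => 1) = 1 ∧
  (∀ f : X → ℂ, BddFun f → (∀ x, 0 ≤ (f x).re ∧ (f x).im = 0) →
    0 ≤ (φ f).re ∧ (φ f).im = 0) ∧
  (∀ f : X → ℂ, BddFun f → ∀ v : X → X → ℂ, IsPartialTranslation v →
    (∀ x : X, f x ≠ 0 → ∃ y : X, v x y = 1) → φ (translateFun v f) = φ f)

/-- `X` is amenable if `ℓ∞(X)` admits an invariant mean. -/
def IsAmenable (X : Type*) [EMetricSpace X] : Prop :=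
  ∃ φ : (X → ℂ) → ℂ, IsInvariantMean φ

/-- A representation of `ℂ_u[X]` bundled with its Hilbert space. -/
structure HilbertRep (X : Type*) [EMetricSpace X] where
  H : Type
  [nacg : NormedAddCommGroup H]
  [ips : InnerProductSpace ℂ H]
  [cs : CompleteSpace H]
  π : (X → X → ℂ) → (H →L[ℂ] H)
  rep : IsRepresentation π

attribute [instance] HilbertRep.nacg HilbertRep.ips HilbertRep.cs

section Basics
variable [EMetricSpace X]

lemma controlled_mono {E F : Set (X × X)} (h : F ⊆ E) (hE : Controlled E) : Controlled F := by
  obtain ⟨R, hR, hsub⟩ := hE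
  exact ⟨R, hR, h.trans hsub⟩

lemma controlled_union {E F : Set (X × X)} (hE : Controlled E) (hF : Controlled F) :
    Controlled (E ∪ F) := by
  obtain ⟨R, hR, hsub⟩ := hE
  obtain ⟨R', hR', hsub'⟩ := hF
  refine ⟨max R R', max_lt hR hR', ?_⟩
  rintro p (hp | hp)
  · have h1 := hsub hp
    simp only [Tube, Set.mem_setOf_eq] at h1 ⊢
    exact le_trans h1 (le_max_left _ _)
  · have h1 := hsub' hp
    simp only [Tube, Set.mem_setOf_eq] at h1 ⊢
    exact le_trans h1 (le_max_right _ _)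

lemma controlled_diag : Controlled {p : X × X | p.1 = p.2} := by
  refine ⟨0, by simp, ?_⟩
  rintro ⟨x, y⟩ (h : x = y)
  simp [Tube, h]

lemma controlled_swap {E : Set (X × X)} (hE : Controlled E) :
    Controlled {p : X × X | (p.2, p.1) ∈ E} := by
  obtain ⟨R, hR, hsub⟩ := hE
  refine ⟨R, hR, ?_⟩
  rintro ⟨x, y⟩ hp
  have := hsub hp
  simpa [Tube, edist_comm] using this

lemma controlled_comp {E F : Set (X × X)} (hE : Controlled E) (hF : Controlled F) :
    Controlled (compRel E F) := by
  obtain ⟨R, hR, hsub⟩ := hE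
  obtain ⟨R', hR', hsub'⟩ := hF
  refine ⟨R + R', ENNReal.add_lt_top.2 ⟨hR, hR'⟩, ?_⟩
  rintro ⟨x, y⟩ ⟨z, h1, h2⟩
  exact le_trans (edist_triangle x z y) (add_le_add (hsub h1) (hsub' h2))

lemma row_fin (hBG : BoundedGeometry X) {E : Set (X × X)} (hE : Controlled E) :
    ∃ N : ℕ, ∀ x : X, {y | (x, y) ∈ E}.Finite ∧ {y | (x, y) ∈ E}.ncard ≤ N := by
  obtain ⟨R, hR, hsub⟩ := hE
  obtain ⟨N, hN⟩ := hBG R hR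
  refine ⟨N, fun x => ?_⟩
  have hss : {y | (x, y) ∈ E} ⊆ {y | edist x y ≤ R} := fun y hy => hsub hy
  obtain ⟨h1, h2⟩ := hN x
  exact ⟨h1.subset hss, le_trans (Set.ncard_le_ncard hss h1) h2⟩

lemma col_fin (hBG : BoundedGeometry X) {E : Set (X × X)} (hE : Controlled E) :
    ∃ N : ℕ, ∀ y : X, {x | (x, y) ∈ E}.Finite ∧ {x | (x, y) ∈ E}.ncard ≤ N := by
  have := row_fin hBG (controlled_swap hE)
  simpa using this

/-- rows of the support of a `CuElem` are finite -/
lemma cu_row_finite (hBG : BoundedGeometry X) {T : X → X → ℂ} (hT : CuElem T) (x : X) :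
    {z | T x z ≠ 0}.Finite := by
  obtain ⟨N, hN⟩ := row_fin hBG hT.2
  exact (hN x).1

lemma cu_col_finite (hBG : BoundedGeometry X) {T : X → X → ℂ} (hT : CuElem T) (z : X) :
    {x | T x z ≠ 0}.Finite := by
  obtain ⟨N, hN⟩ := col_fin hBG hT.2
  exact (hN z).1

end Basics

section CuAlg
variable [EMetricSpace X]

lemma cuElem_one : CuElem (matOne : X → X → ℂ) := by
  refine ⟨⟨1, fun x y => ?_⟩, controlled_mono ?_ controlled_diag⟩
  · by_cases h : x = y <;> simp [matOne, h]
  · rintro ⟨x, y⟩ hp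
    by_contra h
    exact hp (by simpa [matOne] using h)

lemma cuElem_add {T S : X → X → ℂ} (hT : CuElem T) (hS : CuElem S) : CuElem (T + S) := by
  obtain ⟨⟨M, hM⟩, hc⟩ := hT
  obtain ⟨⟨M', hM'⟩, hc'⟩ := hS
  refine ⟨⟨M + M', fun x y => ?_⟩, controlled_mono ?_ (controlled_union hc hc')⟩
  · calc ‖T x y + S x y‖ ≤ _ := norm_add_le _ _
      _ ≤ M + M' := add_le_add (hM x y) (hM' x y)
  · rintro ⟨x, y⟩ hp
    by_contra h
    simp only [Set.mem_union, matSupport, Set.mem_setOf_eq, not_or, not_not] at h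
    exact hp (by simp [h.1, h.2])

lemma cuElem_smul (c : ℂ) {T : X → X → ℂ} (hT : CuElem T) : CuElem (c • T) := by
  obtain ⟨⟨M, hM⟩, hc⟩ := hT
  refine ⟨⟨‖c‖ * M, fun x y => ?_⟩, controlled_mono ?_ hc⟩
  · simp only [Pi.smul_apply, smul_eq_mul, norm_mul]
    exact mul_le_mul_of_nonneg_left (hM x y) (norm_nonneg c)
  · rintro ⟨x, y⟩ hp
    simp only [matSupport, Set.mem_setOf_eq, Pi.smul_apply, smul_eq_mul] at hp ⊢
    exact fun h => hp (by simp [h])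

lemma cuElem_sub {T S : X → X → ℂ} (hT : CuElem T) (hS : CuElem S) : CuElem (T - S) := by
  have : T - S = T + (-1 : ℂ) • S := by ext x y; simp [sub_eq_add_neg]
  rw [this]
  exact cuElem_add hT (cuElem_smul _ hS)

lemma cuElem_sum {ι : Type*} (s : Finset ι) (M : ι → X → X → ℂ)
    (hM : ∀ i ∈ s, CuElem (M i)) : CuElem (∑ i ∈ s, M i) := by
  classical
  induction s using Finset.induction_on with
  | empty => simpa using cuElem_smul 0 cuElem_one
  | insert _ _ hni ih =>
    rename_i a s
    rw [Finset.sum_insert hni]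
    exact cuElem_add (hM a (Finset.mem_insert_self a s))
      (ih fun i hi => hM i (Finset.mem_insert_of_mem hi))

lemma cuElem_star {T : X → X → ℂ} (hT : CuElem T) : CuElem (matStar T) := by
  obtain ⟨⟨M, hM⟩, hc⟩ := hT
  refine ⟨⟨M, fun x y => ?_⟩, ?_⟩
  · simpa [matStar] using hM y x
  · have : matSupport (matStar T) = {p : X × X | (p.2, p.1) ∈ matSupport T} := by
      ext ⟨x, y⟩; simp [matSupport, matStar]
    rw [this]
    exact controlled_swap hc

lemma cuElem_mul (hBG : BoundedGeometry X) {T S : X → X → ℂ}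
    (hT : CuElem T) (hS : CuElem S) : CuElem (matMul T S) := by
  obtain ⟨N, hN⟩ := row_fin hBG hT.2
  obtain ⟨⟨M, hM⟩, hc⟩ := hT
  obtain ⟨⟨M', hM'⟩, hc'⟩ := hS
  have hrow : ∀ x : X, {z | T x z ≠ 0}.Finite ∧ {z | T x z ≠ 0}.ncard ≤ N := by
    intro x; exact hN x
  constructor
  · refine ⟨N * (M * M'), fun x y => ?_⟩
    have hfin := (hrow x).1
    have heq : matMul T S x y = ∑ z ∈ hfin.toFinset, T x z * S z y := by
      apply tsum_eq_sum
      intro z hz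
      simp only [Set.Finite.mem_toFinset, Set.mem_setOf_eq, not_not] at hz
      simp [hz]
    rw [heq]
    calc ‖∑ z ∈ hfin.toFinset, T x z * S z y‖
        ≤ ∑ z ∈ hfin.toFinset, ‖T x z * S z y‖ := by
          exact norm_sum_le _ _
      _ ≤ ∑ _z ∈ hfin.toFinset, (M * M') := by
          refine Finset.sum_le_sum fun z _ => ?_
          rw [norm_mul]
          have h0M : (0:ℝ) ≤ M := le_trans (norm_nonneg _) (hM x z)
          exact mul_le_mul (hM x z) (hM' z y) (norm_nonneg _) h0M
      _ = hfin.toFinset.card * (M * M') := by rw [Finset.sum_const, nsmul_eq_mul]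
      _ ≤ N * (M * M') := by
          have hcard : hfin.toFinset.card ≤ N := by
            have := (hrow x).2
            rwa [Set.ncard_eq_toFinset_card _ hfin] at this
          have h0 : (0:ℝ) ≤ M * M' := by
            have h0M : (0:ℝ) ≤ M := le_trans (norm_nonneg _) (hM x y)
            have h0M' : (0:ℝ) ≤ M' := le_trans (norm_nonneg _) (hM' x y)
            exact mul_nonneg h0M h0M'
          exact mul_le_mul_of_nonneg_right (by exact_mod_cast hcard) h0
  · refine controlled_mono ?_ (controlled_comp hc hc')
    rintro ⟨x, y⟩ hp
    by_contra h
    simp only [compRel, Set.mem_setOf_eq, not_exists] at h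
    apply hp
    have : ∀ z, T x z * S z y = 0 := by
      intro z
      rcases not_and_or.mp (h z) with h1 | h1
      · simp only [matSupport, Set.mem_setOf_eq, not_not] at h1; simp [h1]
      · simp only [matSupport, Set.mem_setOf_eq, not_not] at h1; simp [h1]
    simp only [matSupport, Set.mem_setOf_eq, not_not, matMul]
    simp [this]

end CuAlg



section PM
variable [EMetricSpace X]

/-- A partial matching: at most one element in each row and column, controlled. -/
def IsPM (S : Set (X × X)) : Prop :=
  (∀ x y y' : X, (x, y) ∈ S → (x, y') ∈ S → y = y') ∧
  (∀ x x' y : X, (x, y) ∈ S → (x', y) ∈ S → x = x') ∧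
  Controlled S

def ind (S : Set (X × X)) : X → X → ℂ := fun x y => if (x, y) ∈ S then 1 else 0
def rowInd (S : Set (X × X)) : X → ℂ := fun x => if ∃ y, (x, y) ∈ S then 1 else 0
def colInd (S : Set (X × X)) : X → ℂ := fun y => if ∃ x, (x, y) ∈ S then 1 else 0
def swapSet (S : Set (X × X)) : Set (X × X) := {p | (p.2, p.1) ∈ S}
def bMat (S : Set (X × X)) : X → X → ℂ := diag (rowInd S) - ind S


lemma tsum_zero' {f : X → ℂ} (h : ∀ z, f z = 0) : ∑' z, f z = 0 := by
  have hf : f = fun _ => 0 := funext h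
  rw [hf, tsum_zero]

lemma cuElem_ind {S : Set (X × X)} (hS : Controlled S) : CuElem (ind S) := by
  refine ⟨⟨1, fun x y => ?_⟩, controlled_mono ?_ hS⟩
  · by_cases h : (x, y) ∈ S <;> simp [ind, h]
  · rintro ⟨x, y⟩ hp
    by_contra h
    exact hp (by simp [ind, h])

lemma cuElem_diag (f : X → ℂ) (M : ℝ) (hf : ∀ x, ‖f x‖ ≤ M) :
    CuElem (diag f) := by
  refine ⟨⟨M, fun x y => ?_⟩, controlled_mono ?_ controlled_diag⟩
  · by_cases h : x = y
    · simpa [diag, h] using hf y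
    · simp only [diag, h, if_false, map_zero, norm_zero]
      exact le_trans (norm_nonneg _) (hf x)
  · rintro ⟨x, y⟩ hp
    by_contra h
    simp only [Set.mem_setOf_eq] at h
    exact hp (by simp [diag, h])

lemma rowInd01 (S : Set (X × X)) (x : X) : rowInd S x = 0 ∨ rowInd S x = 1 := by
  by_cases h : ∃ y, (x, y) ∈ S <;> simp [rowInd, h]

lemma cuElem_rowInd (S : Set (X × X)) : CuElem (diag (rowInd S)) := by
  refine cuElem_diag _ 1 fun x => ?_
  rcases rowInd01 S x with h | h <;> simp [h]

lemma cuElem_colInd (S : Set (X × X)) : CuElem (diag (colInd S)) := by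
  refine cuElem_diag _ 1 fun x => ?_
  by_cases h : ∃ z, (z, x) ∈ S <;> simp [colInd, h]

lemma cuElem_bMat {S : Set (X × X)} (hS : Controlled S) : CuElem (bMat S) :=
  cuElem_sub (cuElem_rowInd S) (cuElem_ind hS)

lemma matStar_ind (S : Set (X × X)) : matStar (ind S) = ind (swapSet S) := by
  ext x y
  by_cases h : (y, x) ∈ S <;> simp [matStar, ind, swapSet, h]

lemma matStar_diag_real (f : X → ℂ) (hf : ∀ x, starRingEnd ℂ (f x) = f x) :
    matStar (diag f) = diag f := by
  ext x y
  by_cases h : x = y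
  · subst h; simp [matStar, diag, hf]
  · simp [matStar, diag, h, Ne.symm h]

lemma matStar_rowInd (S : Set (X × X)) : matStar (diag (rowInd S)) = diag (rowInd S) := by
  refine matStar_diag_real _ fun x => ?_
  rcases rowInd01 S x with h | h <;> simp [h]

lemma matStar_bMat (S : Set (X × X)) :
    matStar (bMat S) = diag (rowInd S) - ind (swapSet S) := by
  ext x y
  simp only [matStar, bMat, Pi.sub_apply, map_sub]
  rw [show (starRingEnd ℂ) (diag (rowInd S) y x) = diag (rowInd S) x y from ?_,
      show (starRingEnd ℂ) (ind S y x) = ind (swapSet S) x y from ?_]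
  · by_cases h : (y, x) ∈ S <;> simp [ind, swapSet, h]
  · by_cases h : y = x
    · subst h
      rcases rowInd01 S y with h1 | h1 <;> simp [diag, h1]
    · simp [diag, h, Ne.symm h]

lemma matMul_diag_left (f : X → ℂ) (T : X → X → ℂ) :
    matMul (diag f) T = fun x y => f x * T x y := by
  ext x y
  refine (tsum_eq_single x fun z hz => ?_).trans (by simp [diag])
  simp [diag, Ne.symm hz]

lemma matMul_ind_star (S : Set (X × X)) (hS : IsPM S) :
    matMul (ind S) (matStar (ind S)) = diag (rowInd S) := by
  rw [matStar_ind]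
  ext x y
  show ∑' z, ind S x z * ind (swapSet S) z y = _
  by_cases hxy : x = y
  · subst hxy
    by_cases h : ∃ z, (x, z) ∈ S
    · rw [tsum_eq_single h.choose]
      · simp [ind, swapSet, h.choose_spec, diag, rowInd, h]
      · intro z hz
        have : (x, z) ∉ S := fun hc => hz (hS.1 x z h.choose hc h.choose_spec)
        simp [ind, this]
    · push_neg at h
      rw [tsum_zero' fun z => by simp [ind, h z]]
      simp [diag, rowInd, h]
  · rw [tsum_zero' fun z => ?_]
    · simp [diag, hxy]
    simp only [ind, swapSet, Set.mem_setOf_eq, mul_ite, mul_one, mul_zero, ite_eq_right_iff]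
    intro h1 h2
    exact absurd (hS.2.1 x y z h2 h1) hxy

lemma matMul_star_ind (S : Set (X × X)) (hS : IsPM S) :
    matMul (matStar (ind S)) (ind S) = diag (colInd S) := by
  rw [matStar_ind]
  ext x y
  show ∑' z, ind (swapSet S) x z * ind S z y = _
  by_cases hxy : x = y
  · subst hxy
    by_cases h : ∃ z, (z, x) ∈ S
    · rw [tsum_eq_single h.choose]
      · simp [ind, swapSet, h.choose_spec, diag, colInd, h]
      · intro z hz
        have : (z, x) ∉ S := fun hc => hz (hS.2.1 z h.choose x hc h.choose_spec)
        simp [ind, swapSet, this]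
    · push_neg at h
      rw [tsum_zero' fun z => by simp [ind, swapSet, h z]]
      simp [diag, colInd, h]
  · rw [tsum_zero' fun z => ?_]
    · simp [diag, hxy]
    simp only [ind, swapSet, Set.mem_setOf_eq, mul_ite, mul_one, mul_zero, ite_eq_right_iff]
    intro h1 h2
    exact absurd (hS.1 z x y h2 h1) hxy

end PM

section Beta
variable [EMetricSpace X]

lemma ind_real (S : Set (X × X)) (x y : X) :
    starRingEnd ℂ (ind S x y) = ind S x y := by
  by_cases h : (x, y) ∈ S <;> simp [ind, h]

lemma bMat_real (S : Set (X × X)) (z x : X) :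
    starRingEnd ℂ (bMat S z x) = bMat S z x := by
  simp only [bMat, Pi.sub_apply, map_sub, ind_real]
  congr 1
  by_cases h : z = x
  · subst h
    rcases rowInd01 S z with h1 | h1 <;> simp [diag, h1]
  · simp [diag, h]

lemma rowInd_mul_ind (S : Set (X × X)) (x y : X) :
    rowInd S x * ind S x y = ind S x y := by
  by_cases h : (x, y) ∈ S
  · simp [ind, h, rowInd, show ∃ z, (x, z) ∈ S from ⟨y, h⟩]
  · simp [ind, h]

lemma beta_entry (S : Set (X × X)) (hS : IsPM S) :
    matMul (matStar (bMat S)) (bMat S) = fun x y =>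
      (if x = y then rowInd S x + colInd S x else 0) - ind S x y - ind S y x := by
  ext x y
  have hf : ∀ z, matStar (bMat S) x z * bMat S z y
      = (diag (rowInd S) z x * diag (rowInd S) z y
          - diag (rowInd S) z x * ind S z y)
        - ind S z x * diag (rowInd S) z y
        + ind S z x * ind S z y := by
    intro z
    show starRingEnd ℂ (bMat S z x) * bMat S z y = _
    rw [bMat_real]
    simp only [bMat, Pi.sub_apply]
    ring
  set t1 : X → ℂ := fun z => diag (rowInd S) z x * diag (rowInd S) z y with ht1
  set t2 : X → ℂ := fun z => diag (rowInd S) z x * ind S z y with ht2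
  set t3 : X → ℂ := fun z => ind S z x * diag (rowInd S) z y with ht3
  set t4 : X → ℂ := fun z => ind S z x * ind S z y with ht4
  have s1 : Summable t1 := summable_of_ne_finset_zero (s := {x}) fun z hz => by
    simp only [Finset.mem_singleton] at hz
    simp [ht1, diag, hz]
  have s2 : Summable t2 := summable_of_ne_finset_zero (s := {x}) fun z hz => by
    simp only [Finset.mem_singleton] at hz
    simp [ht2, diag, hz]
  have s3 : Summable t3 := summable_of_ne_finset_zero (s := {y}) fun z hz => by
    simp only [Finset.mem_singleton] at hz
    simp [ht3, diag, hz]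
  have s4 : Summable t4 := by
    by_cases h : ∃ z, (z, x) ∈ S
    · refine summable_of_ne_finset_zero (s := {h.choose}) fun z hz => ?_
      simp only [Finset.mem_singleton] at hz
      have : (z, x) ∉ S := fun hc => hz (hS.2.1 z h.choose x hc h.choose_spec)
      simp [ht4, ind, this]
    · push_neg at h
      exact summable_of_ne_finset_zero (s := ∅) fun z _ => by simp [ht4, ind, h z]
  have h1 : ∑' z, t1 z = if x = y then rowInd S x else 0 := by
    rw [tsum_eq_single x fun z hz => by simp [ht1, diag, hz]]
    by_cases hxy : x = y
    · subst hxy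
      rcases rowInd01 S x with h' | h' <;> simp [ht1, diag, h']
    · simp [ht1, diag, hxy, Ne.symm hxy]
  have h2 : ∑' z, t2 z = ind S x y := by
    rw [tsum_eq_single x fun z hz => by simp [ht2, diag, hz]]
    simp only [ht2, diag, if_pos rfl]
    exact rowInd_mul_ind S x y
  have h3 : ∑' z, t3 z = ind S y x := by
    rw [tsum_eq_single y fun z hz => by simp [ht3, diag, hz]]
    simp only [ht3, diag, if_pos rfl]
    rw [mul_comm]
    exact rowInd_mul_ind S y x
  have h4 : ∑' z, t4 z = if x = y then colInd S x else 0 := by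
    have := congrFun (congrFun (matMul_star_ind S hS) x) y
    have heq : matMul (matStar (ind S)) (ind S) x y = ∑' z, t4 z := by
      refine tsum_congr fun z => ?_
      show matStar (ind S) x z * ind S z y = _
      simp only [matStar, ind_real, ht4]
    rw [heq] at this
    rw [this]
    by_cases hxy : x = y
    · subst hxy; simp [diag]
    · simp [diag, hxy]
  calc matMul (matStar (bMat S)) (bMat S) x y
      = ∑' z, (t1 z - t2 z - t3 z + t4 z) := tsum_congr hf
    _ = (∑' z, t1 z) - (∑' z, t2 z) - (∑' z, t3 z) + ∑' z, t4 z := by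
        rw [Summable.tsum_add ((s1.sub s2).sub s3) s4, Summable.tsum_sub (s1.sub s2) s3, Summable.tsum_sub s1 s2]
    _ = _ := by
        rw [h1, h2, h3, h4]
        by_cases hxy : x = y
        · subst hxy; simp; ring
        · simp [hxy]

end Beta

section Cover
variable [EMetricSpace X]

lemma exists_injOn_fin {s : Set X} (hs : s.Finite) {N : ℕ} (hN : s.ncard ≤ N) :
    ∃ f : X → Fin (N + 1), Set.InjOn f s := by
  classical
  have hcard : hs.toFinset.card ≤ N := by
    rwa [Set.ncard_eq_toFinset_card _ hs] at hN
  let e := hs.toFinset.equivFin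
  refine ⟨fun y => if h : y ∈ s then Fin.castLE (by omega)
    (e ⟨y, hs.mem_toFinset.2 h⟩) else ⟨0, Nat.succ_pos N⟩, ?_⟩
  intro y hy y' hy' hf
  simp only [dif_pos hy, dif_pos hy'] at hf
  have : e ⟨y, hs.mem_toFinset.2 hy⟩ = e ⟨y', hs.mem_toFinset.2 hy'⟩ := by
    apply Fin.castLE_injective
    exact hf
  have := e.injective this
  simpa using congrArg Subtype.val this

lemma exists_cover (hBG : BoundedGeometry X) {E : Set (X × X)} (hE : Controlled E) :
    ∃ (m : ℕ) (S : Fin m → Set (X × X)), 0 < m ∧ (∀ i, IsPM (S i)) ∧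
      (∀ i, S i ⊆ E) ∧ E ⊆ ⋃ i, S i := by
  classical
  obtain ⟨N₁, hN₁⟩ := row_fin hBG hE
  obtain ⟨N₂, hN₂⟩ := col_fin hBG hE
  set N := max N₁ N₂ with hN
  -- row injections
  have hrow : ∀ x : X, ∃ f : X → Fin (N + 1), Set.InjOn f {y | (x, y) ∈ E} := by
    intro x
    exact exists_injOn_fin (hN₁ x).1 (le_trans (hN₁ x).2 (le_max_left _ _))
  choose ρ hρ using hrow
  set Srow : Fin (N + 1) → Set (X × X) := fun j => {p | p ∈ E ∧ ρ p.1 p.2 = j} with hSrow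
  have hcol : ∀ (j : Fin (N + 1)) (y : X), ∃ g : X → Fin (N + 1),
      Set.InjOn g {x | (x, y) ∈ Srow j} := by
    intro j y
    have hsub : {x | (x, y) ∈ Srow j} ⊆ {x | (x, y) ∈ E} := fun x hx => hx.1
    refine exists_injOn_fin ((hN₂ y).1.subset hsub) ?_
    exact le_trans (le_trans (Set.ncard_le_ncard hsub (hN₂ y).1) (hN₂ y).2) (le_max_right _ _)
  choose σ hσ using hcol
  set S2 : Fin (N + 1) → Fin (N + 1) → Set (X × X) :=
    fun j k => {p | p ∈ Srow j ∧ σ j p.2 p.1 = k} with hS2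
  refine ⟨(N + 1) * (N + 1), fun i => S2 (finProdFinEquiv.symm i).1 (finProdFinEquiv.symm i).2,
    Nat.succ_mul_pos _ (Nat.succ_pos N) , ?_, ?_, ?_⟩
  · intro i
    set j := (finProdFinEquiv.symm i).1
    set k := (finProdFinEquiv.symm i).2
    refine ⟨?_, ?_, ?_⟩
    · rintro x y y' ⟨⟨hE1, hj1⟩, _⟩ ⟨⟨hE2, hj2⟩, _⟩
      exact hρ x hE1 hE2 (hj1.trans hj2.symm)
    · rintro x x' y ⟨hS1, hk1⟩ ⟨hS2', hk2⟩
      exact hσ j y hS1 hS2' (hk1.trans hk2.symm)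
    · exact controlled_mono (fun p hp => hp.1.1) hE
  · intro i p hp
    exact hp.1.1
  · intro p hp
    rcases p with ⟨x, y⟩
    refine Set.mem_iUnion.2 ⟨finProdFinEquiv (ρ x y, σ (ρ x y) y x), ?_⟩
    simp only [Equiv.symm_apply_apply]
    exact ⟨⟨hp, rfl⟩, rfl⟩

end Cover


section RepLemmas
variable [EMetricSpace X]
variable {H : Type*} [NormedAddCommGroup H] [InnerProductSpace ℂ H] [CompleteSpace H]
variable {π : (X → X → ℂ) → (H →L[ℂ] H)}

local notation "⟪" x ", " y "⟫" => @inner ℂ _ _ x y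

lemma rep_zero (hπ : IsRepresentation π) : π 0 = 0 := by
  have h0 : (0 : X → X → ℂ) = (0 : ℂ) • matOne := by ext x y; simp
  rw [h0, hπ.map_smul 0 matOne cuElem_one, zero_smul]

lemma rep_sub (hπ : IsRepresentation π) {T S : X → X → ℂ} (hT : CuElem T) (hS : CuElem S) :
    π (T - S) = π T - π S := by
  have h : T - S = T + (-1 : ℂ) • S := by ext x y; simp [sub_eq_add_neg]
  rw [h, hπ.map_add T ((-1 : ℂ) • S) hT (cuElem_smul _ hS),
    hπ.map_smul (-1) S hS]
  simp [sub_eq_add_neg]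

lemma rep_sum (hπ : IsRepresentation π) {ι : Type*} (s : Finset ι) (M : ι → X → X → ℂ)
    (hM : ∀ i, CuElem (M i)) : π (∑ i ∈ s, M i) = ∑ i ∈ s, π (M i) := by
  classical
  induction s using Finset.induction_on with
  | empty => simpa using rep_zero hπ
  | insert _ _ hni ih =>
    rename_i a s
    rw [Finset.sum_insert hni, Finset.sum_insert hni,
      hπ.map_add _ _ (hM a) (cuElem_sum s M fun i _ => hM i), ih]

/-- a self-adjoint idempotent acts as a contraction -/
lemma rep_proj_contraction (hπ : IsRepresentation π) {e : X → X → ℂ} (he : CuElem e)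
    (hstar : matStar e = e) (hidem : matMul e e = e) (ξ : H) : ‖π e ξ‖ ≤ ‖ξ‖ := by
  have hadj : ContinuousLinearMap.adjoint (π e) = π e := by
    rw [← hπ.map_star e he, hstar]
  have hPP : π e (π e ξ) = π e ξ := by
    have := hπ.map_mul e e he he
    rw [hidem] at this
    calc π e (π e ξ) = (π e * π e) ξ := rfl
      _ = π e ξ := by rw [← this]
  have h1 : (‖π e ξ‖ : ℝ) ^ 2 = RCLike.re ⟪π e ξ, π e ξ⟫ := (inner_self_eq_norm_sq _).symm
  have h2 : ⟪π e ξ, π e ξ⟫ = ⟪ξ, π e ξ⟫ := by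
    calc ⟪π e ξ, π e ξ⟫ = ⟪ξ, ContinuousLinearMap.adjoint (π e) (π e ξ)⟫ := by
          rw [ContinuousLinearMap.adjoint_inner_right]
      _ = ⟪ξ, π e ξ⟫ := by rw [hadj, hPP]
  have h3 : ‖π e ξ‖ ^ 2 ≤ ‖ξ‖ * ‖π e ξ‖ := by
    rw [h1, h2]
    calc RCLike.re ⟪ξ, π e ξ⟫ ≤ ‖⟪ξ, π e ξ⟫‖ := RCLike.re_le_norm _
      _ ≤ ‖ξ‖ * ‖π e ξ‖ := norm_inner_le_norm _ _
  rcases eq_or_lt_of_le (norm_nonneg (π e ξ)) with h | h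
  · rw [← h]; exact norm_nonneg ξ
  · nlinarith

/-- partial translations act as contractions -/
lemma rep_pm_contraction (hπ : IsRepresentation π) {S : Set (X × X)} (hS : IsPM S) (ξ : H) :
    ‖π (ind S) ξ‖ ≤ ‖ξ‖ := by
  have hce := cuElem_ind hS.2.2
  have hP : π (matStar (ind S)) (π (ind S) ξ) = π (diag (colInd S)) ξ := by
    have := hπ.map_mul (matStar (ind S)) (ind S) (cuElem_star hce) hce
    rw [matMul_star_ind S hS] at this
    calc π (matStar (ind S)) (π (ind S) ξ)
        = (π (matStar (ind S)) * π (ind S)) ξ := rfl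
      _ = π (diag (colInd S)) ξ := by rw [← this]
  have colInd01 : ∀ x, colInd S x = 0 ∨ colInd S x = 1 := by
    intro x; by_cases h : ∃ z, (z, x) ∈ S <;> simp [colInd, h]
  have hdce : CuElem (diag (colInd S)) := cuElem_colInd S
  have hdstar : matStar (diag (colInd S)) = diag (colInd S) := by
    refine matStar_diag_real _ fun x => ?_
    rcases colInd01 x with h | h <;> simp [h]
  have hdidem : matMul (diag (colInd S)) (diag (colInd S)) = diag (colInd S) := by
    rw [matMul_diag_left]
    ext x y
    by_cases h : x = y
    · subst h
      rcases colInd01 x with h1 | h1 <;> simp [diag, h1]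
    · simp [diag, h]
  have h1 : (‖π (ind S) ξ‖ : ℝ) ^ 2 = RCLike.re ⟪π (ind S) ξ, π (ind S) ξ⟫ :=
    (inner_self_eq_norm_sq _).symm
  have h2 : ⟪π (ind S) ξ, π (ind S) ξ⟫ = ⟪ξ, π (diag (colInd S)) ξ⟫ := by
    calc ⟪π (ind S) ξ, π (ind S) ξ⟫
        = ⟪ξ, ContinuousLinearMap.adjoint (π (ind S)) (π (ind S) ξ)⟫ := by
          rw [ContinuousLinearMap.adjoint_inner_right]
      _ = ⟪ξ, π (diag (colInd S)) ξ⟫ := by rw [← hπ.map_star _ hce, hP]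
  have h3 : ‖π (ind S) ξ‖ ^ 2 ≤ ‖ξ‖ * ‖ξ‖ := by
    rw [h1, h2]
    calc RCLike.re ⟪ξ, π (diag (colInd S)) ξ⟫ ≤ ‖⟪ξ, π (diag (colInd S)) ξ⟫‖ :=
          RCLike.re_le_norm _
      _ ≤ ‖ξ‖ * ‖π (diag (colInd S)) ξ‖ := norm_inner_le_norm _ _
      _ ≤ ‖ξ‖ * ‖ξ‖ := by
          exact mul_le_mul_of_nonneg_left
            (rep_proj_contraction hπ hdce hdstar hdidem ξ) (norm_nonneg ξ)
  nlinarith [norm_nonneg (π (ind S) ξ), norm_nonneg ξ]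

end RepLemmas

section Decomp
variable [EMetricSpace X]

lemma ind_eq_one_iff (S : Set (X × X)) (x y : X) : ind S x y = 1 ↔ (x, y) ∈ S := by
  by_cases h : (x, y) ∈ S <;> simp [ind, h]

lemma matSupport_ind (S : Set (X × X)) : matSupport (ind S) = S := by
  ext ⟨x, y⟩
  by_cases h : (x, y) ∈ S <;> simp [matSupport, ind, h]

lemma ind_isPartialTranslation {S : Set (X × X)} (hS : IsPM S) :
    IsPartialTranslation (ind S) := by
  refine ⟨fun x y => ?_, fun x y y' h1 h2 => ?_, fun x x' y h1 h2 => ?_, ?_⟩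
  · by_cases h : (x, y) ∈ S
    · right; simp [ind, h]
    · left; simp [ind, h]
  · exact hS.1 x y y' ((ind_eq_one_iff S x y).1 h1) ((ind_eq_one_iff S x y').1 h2)
  · exact hS.2.1 x x' y ((ind_eq_one_iff S x y).1 h1) ((ind_eq_one_iff S x' y).1 h2)
  · rw [matSupport_ind]; exact hS.2.2

lemma decomp {m : ℕ} (S : Fin m → Set (X × X)) (hPM : ∀ i, IsPM (S i))
    (S' : Set (X × X)) (hS' : IsPM S') (hcov : S' ⊆ ⋃ i, S i) :
    ∃ e : Fin m → X → ℂ, (∀ i x, e i x = 0 ∨ e i x = 1) ∧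
      bMat S' = ∑ i, matMul (diag (e i)) (bMat (S i)) := by
  classical
  set Ti : Fin m → Set (X × X) :=
    fun i => {p : X × X | p ∈ S' ∧ p ∈ S i ∧ ∀ j, j < i → p ∉ S j} with hTi
  refine ⟨fun i => rowInd (Ti i), fun i x => rowInd01 _ x, ?_⟩
  ext x y
  rw [Finset.sum_apply, Finset.sum_apply]
  simp only [matMul_diag_left]
  by_cases hx : ∃ y0, (x, y0) ∈ S'
  · obtain ⟨y0, hy0⟩ := hx
    obtain ⟨i1, hi1⟩ := Set.mem_iUnion.1 (hcov hy0)
    set I : Finset (Fin m) := Finset.univ.filter (fun i => (x, y0) ∈ S i) with hI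
    have hIne : I.Nonempty := ⟨i1, by simp [hI, hi1]⟩
    set i0 := I.min' hIne with hi0def
    have hi0 : (x, y0) ∈ S i0 := by
      have := I.min'_mem hIne
      simpa [hI] using this
    have hmemTi : ∀ j, (x, y0) ∈ Ti j ↔ j = i0 := by
      intro j
      constructor
      · rintro ⟨-, hj1, hj2⟩
        have hjI : j ∈ I := by simp [hI, hj1]
        have h1 : i0 ≤ j := I.min'_le j hjI
        rcases eq_or_lt_of_le h1 with h | h
        · exact h.symm
        · exact absurd hi0 (hj2 i0 h)
      · rintro rfl
        refine ⟨hy0, hi0, fun j hj hmem => ?_⟩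
        have hjI : j ∈ I := by simp [hI, hmem]
        exact absurd (I.min'_le j hjI) (not_le.2 hj)
    have he : ∀ j, rowInd (Ti j) x = if j = i0 then 1 else 0 := by
      intro j
      by_cases hj : j = i0
      · rw [hj]
        have hex : ∃ y', (x, y') ∈ Ti i0 := ⟨y0, (hmemTi i0).2 rfl⟩
        simp [rowInd, hex]
      · have : ¬∃ y', (x, y') ∈ Ti j := by
          rintro ⟨y', hy'⟩
          have hyS' : (x, y') ∈ S' := hy'.1
          have : y' = y0 := hS'.1 x y' y0 hyS' hy0
          subst this
          exact hj ((hmemTi j).1 hy')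
        simp [rowInd, this, hj]
    have hsum : ∑ j, rowInd (Ti j) x * bMat (S j) x y = bMat (S i0) x y := by
      rw [Finset.sum_congr rfl (fun j _ => by rw [he j])]
      simp [Finset.sum_ite_eq']
    rw [hsum]
    have hrS' : rowInd S' x = 1 := by simp [rowInd, show ∃ y0, (x, y0) ∈ S' from ⟨y0, hy0⟩]
    have hrS0 : rowInd (S i0) x = 1 := by simp [rowInd, show ∃ z, (x, z) ∈ S i0 from ⟨y0, hi0⟩]
    have hiS' : ind S' x y = ind (S i0) x y := by
      have h1 : (x, y) ∈ S' ↔ y = y0 :=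
        ⟨fun h => hS'.1 x y y0 h hy0, fun h => h ▸ hy0⟩
      have h2 : (x, y) ∈ S i0 ↔ y = y0 :=
        ⟨fun h => (hPM i0).1 x y y0 h hi0, fun h => h ▸ hi0⟩
      by_cases h : y = y0
      · subst h; simp [ind, hy0, hi0]
      · simp [ind, h1, h2, h]
    simp only [bMat, Pi.sub_apply, diag, hiS', hrS', hrS0]
  · push_neg at hx
    have hL : bMat S' x y = 0 := by
      have h1 : rowInd S' x = 0 := by simp [rowInd, hx]
      have h2 : ind S' x y = 0 := by simp [ind, hx y]
      simp only [bMat, Pi.sub_apply, diag, h1, h2]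
      simp
    have hR : ∀ j, rowInd (Ti j) x = 0 := by
      intro j
      have : ¬∃ y', (x, y') ∈ Ti j := by
        rintro ⟨y', hy'⟩
        exact hx y' hy'.1
      simp [rowInd, this]
    rw [hL]
    rw [Finset.sum_congr rfl fun j _ => by rw [hR j]]
    simp

end Decomp

section CS

variable {H : Type*} [NormedAddCommGroup H] [InnerProductSpace ℂ H]

local notation "⟪" x ", " y "⟫" => @inner ℂ _ _ x y

lemma cs_contraction (T : H →L[ℂ] H) (K : Submodule ℂ H) {δ : ℝ} (hδ : 0 ≤ δ)
    (hsa : ∀ ξ η : H, ⟪T ξ, η⟫ = ⟪ξ, T η⟫)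
    (hquad : ∀ ξ ∈ K, 0 ≤ RCLike.re ⟪ξ, T ξ⟫ ∧ RCLike.re ⟪ξ, T ξ⟫ ≤ δ * ‖ξ‖ ^ 2)
    (hKinv : ∀ ξ ∈ K, T ξ ∈ K) :
    ∀ ξ ∈ K, ‖T ξ‖ ≤ δ * ‖ξ‖ := by
  have key : ∀ ξ ∈ K, ∀ η ∈ K,
      ‖(⟪ξ, T η⟫ : ℂ)‖ ^ 2 ≤ RCLike.re ⟪ξ, T ξ⟫ * RCLike.re ⟪η, T η⟫ := by
    intro ξ hξ η hη
    set z : ℂ := ⟪ξ, T η⟫ with hzdef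
    by_cases hz : z = 0
    · rw [hz]
      simpa using mul_nonneg (hquad ξ hξ).1 (hquad η hη).1
    set c : ℂ := (‖z‖ : ℂ) / z with hcdef
    have hcz : c * z = (‖z‖ : ℂ) := div_mul_cancel₀ _ hz
    have hcnorm : ‖c‖ = 1 := by
      rw [hcdef, norm_div, Complex.norm_real, norm_norm, div_self (norm_ne_zero_iff.2 hz)]
    set η' : H := c • η with hη'def
    have hη'K : η' ∈ K := K.smul_mem c hη
    have h1 : ⟪ξ, T η'⟫ = (‖z‖ : ℂ) := by
      rw [hη'def, map_smul, inner_smul_right, ← hzdef, hcz]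
    have h2 : ⟪η', T ξ⟫ = (‖z‖ : ℂ) := by
      calc ⟪η', T ξ⟫ = (starRingEnd ℂ) ⟪T ξ, η'⟫ := (inner_conj_symm η' (T ξ)).symm
        _ = (starRingEnd ℂ) ⟪ξ, T η'⟫ := by rw [hsa]
        _ = (‖z‖ : ℂ) := by rw [h1]; exact Complex.conj_ofReal _
    have h3 : ⟪η', T η'⟫ = ⟪η, T η⟫ := by
      rw [hη'def, map_smul, inner_smul_right, inner_smul_left]
      have hns : c * (starRingEnd ℂ) c = 1 := by
        rw [Complex.mul_conj]
        norm_cast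
        rw [Complex.normSq_eq_norm_sq, hcnorm, one_pow]
      rw [← mul_assoc, hns, one_mul]
    set a : ℝ := RCLike.re ⟪ξ, T ξ⟫ with hadef
    set b : ℝ := RCLike.re ⟪η, T η⟫ with hbdef
    have hq : ∀ t : ℝ, 0 ≤ a - 2 * t * ‖z‖ + t ^ 2 * b := by
      intro t
      have hwK : ξ - (t : ℂ) • η' ∈ K := K.sub_mem hξ (K.smul_mem _ hη'K)
      have hquadw := (hquad _ hwK).1
      have hTw : T (ξ - (t : ℂ) • η') = T ξ - (t : ℂ) • T η' := by
        rw [map_sub, map_smul]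
      have hexp : ⟪ξ - (t : ℂ) • η', T (ξ - (t : ℂ) • η')⟫
          = ⟪ξ, T ξ⟫ - (t : ℂ) * (‖z‖ : ℂ) - (t : ℂ) * (‖z‖ : ℂ)
            + (t : ℂ) ^ 2 * ⟪η, T η⟫ := by
        rw [hTw]
        simp only [inner_sub_left, inner_sub_right, inner_smul_left, inner_smul_right,
          h1, h2, h3, Complex.conj_ofReal]
        ring
      have hre : RCLike.re (⟪ξ - (t : ℂ) • η', T (ξ - (t : ℂ) • η')⟫ : ℂ)
          = a - 2 * t * ‖z‖ + t ^ 2 * b := by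
        rw [hexp, show ((t : ℂ) * (‖z‖ : ℂ)) = ((t * ‖z‖ : ℝ) : ℂ) by push_cast; ring,
          show ((t : ℂ) ^ 2 * (⟪η, T η⟫ : ℂ)) = ((t ^ 2 : ℝ) : ℂ) * ⟪η, T η⟫ by
            push_cast; ring]
        simp only [RCLike.re_to_complex, Complex.sub_re, Complex.add_re, Complex.ofReal_re,
          Complex.re_ofReal_mul]
        simp only [RCLike.re_to_complex] at hadef hbdef
        rw [← hadef, ← hbdef]
        ring
      rw [hre] at hquadw
      exact hquadw
    have hb0 : 0 ≤ b := (hquad η hη).1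
    have hznorm : 0 < ‖z‖ := norm_pos_iff.2 hz
    rcases eq_or_lt_of_le hb0 with hb | hb
    · exfalso
      have ht := hq ((a + 1) / (2 * ‖z‖))
      rw [← hb] at ht
      have hz2 : (2 : ℝ) * ‖z‖ ≠ 0 := by positivity
      have hsimp : 2 * ((a + 1) / (2 * ‖z‖)) * ‖z‖ = a + 1 := by
        rw [show 2 * ((a + 1) / (2 * ‖z‖)) * ‖z‖ = (a + 1) / (2 * ‖z‖) * (2 * ‖z‖) by ring,
          div_mul_cancel₀ _ hz2]
      have hcon : (0 : ℝ) ≤ a - (a + 1) := by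
        calc (0:ℝ) ≤ a - 2 * ((a + 1) / (2 * ‖z‖)) * ‖z‖ + ((a + 1) / (2 * ‖z‖)) ^ 2 * 0 := ht
          _ = a - (a + 1) := by rw [hsimp]; ring
      linarith
    · have ht := hq (‖z‖ / b)
      have hb' : b ≠ 0 := ne_of_gt hb
      have hsimp : a - 2 * (‖z‖ / b) * ‖z‖ + (‖z‖ / b) ^ 2 * b = a - ‖z‖ ^ 2 / b := by
        field_simp
        ring
      rw [hsimp] at ht
      have hle : ‖z‖ ^ 2 / b ≤ a := by linarith
      calc ‖z‖ ^ 2 = ‖z‖ ^ 2 / b * b := by rw [div_mul_cancel₀ _ hb']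
        _ ≤ a * b := mul_le_mul_of_nonneg_right hle (le_of_lt hb)
  intro ξ hξ
  have hTξK := hKinv ξ hξ
  have h := key (T ξ) hTξK ξ hξ
  have hself : (⟪T ξ, T ξ⟫ : ℂ) = ((‖T ξ‖ : ℂ)) ^ 2 := inner_self_eq_norm_sq_to_K _
  have hnorm : ‖(⟪T ξ, T ξ⟫ : ℂ)‖ = ‖T ξ‖ ^ 2 := by
    rw [hself]
    rw [norm_pow, Complex.norm_real, norm_norm]
  rw [hnorm] at h
  have h1 := (hquad (T ξ) hTξK).2
  have h2 := (hquad ξ hξ).2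
  have h0a := (hquad (T ξ) hTξK).1
  have h0b := (hquad ξ hξ).1
  rcases eq_or_lt_of_le (norm_nonneg (T ξ)) with h' | h'
  · rw [← h']
    positivity
  · have hAB : RCLike.re (⟪T ξ, T (T ξ)⟫ : ℂ) * RCLike.re (⟪ξ, T ξ⟫ : ℂ)
        ≤ (δ * ‖T ξ‖ ^ 2) * (δ * ‖ξ‖ ^ 2) :=
      mul_le_mul h1 h2 h0b (by positivity)
    have hx4 : (‖T ξ‖ ^ 2) ^ 2 ≤ δ ^ 2 * ‖T ξ‖ ^ 2 * ‖ξ‖ ^ 2 := by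
      nlinarith [le_trans h hAB]
    have hx2 : ‖T ξ‖ ^ 2 ≤ δ ^ 2 * ‖ξ‖ ^ 2 := by
      nlinarith [hx4, mul_pos h' h']
    nlinarith [hx2, norm_nonneg ξ, mul_nonneg hδ (norm_nonneg ξ),
      sq_nonneg (‖T ξ‖ + δ * ‖ξ‖), sq_nonneg (‖T ξ‖ - δ * ‖ξ‖)]

end CS

section AMat
variable [EMetricSpace X]

/-- The averaged Markov operator built from a family of partial matchings. -/
def AMat {m : ℕ} (S : Fin m → Set (X × X)) : X → X → ℂ :=
  matOne - ((4 * m : ℂ)⁻¹) • ∑ i, matMul (matStar (bMat (S i))) (bMat (S i))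

lemma colInd01 (S : Set (X × X)) (x : X) : colInd S x = 0 ∨ colInd S x = 1 := by
  by_cases h : ∃ z, (z, x) ∈ S <;> simp [colInd, h]

lemma AMat_entry {m : ℕ} (S : Fin m → Set (X × X)) (hPM : ∀ i, IsPM (S i)) (x y : X) :
    AMat S x y = (if x = y then 1 else 0) - (4 * m : ℂ)⁻¹ *
      ∑ i, ((if x = y then rowInd (S i) x + colInd (S i) x else 0)
        - ind (S i) x y - ind (S i) y x) := by
  have hβ : ∀ i : Fin m, matMul (matStar (bMat (S i))) (bMat (S i)) x y
      = (if x = y then rowInd (S i) x + colInd (S i) x else 0)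
        - ind (S i) x y - ind (S i) y x := by
    intro i
    rw [beta_entry (S i) (hPM i)]
  calc AMat S x y
      = matOne x y - (4 * m : ℂ)⁻¹ *
          (∑ i, matMul (matStar (bMat (S i))) (bMat (S i))) x y := rfl
    _ = _ := by
        rw [Finset.sum_apply, Finset.sum_apply, Finset.sum_congr rfl fun i _ => hβ i]
        rfl

lemma if01_im (P : Prop) [Decidable P] : (if P then (1 : ℂ) else 0).im = 0 := by
  by_cases h : P <;> simp [h]

lemma gterm_im {m : ℕ} (S : Fin m → Set (X × X)) (i : Fin m) (x y : X) :
    ((if x = y then rowInd (S i) x + colInd (S i) x else 0)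
      - ind (S i) x y - ind (S i) y x).im = 0 := by
  by_cases h1 : x = y <;>
    simp [h1, rowInd, colInd, ind, Complex.sub_im, Complex.add_im, if01_im]

lemma gterm_re_diag {m : ℕ} (S : Fin m → Set (X × X)) (i : Fin m) (x : X) :
    0 ≤ ((rowInd (S i) x + colInd (S i) x : ℂ)
      - ind (S i) x x - ind (S i) x x).re ∧
    ((rowInd (S i) x + colInd (S i) x : ℂ)
      - ind (S i) x x - ind (S i) x x).re ≤ 2 := by
  by_cases h4 : (x, x) ∈ S i
  · have h2 : ∃ y', (x, y') ∈ S i := ⟨x, h4⟩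
    have h3 : ∃ x', (x', x) ∈ S i := ⟨x, h4⟩
    simp [rowInd, colInd, ind, h2, h3, h4]
  · by_cases h2 : ∃ y', (x, y') ∈ S i <;>
      by_cases h3 : ∃ x', (x', x) ∈ S i <;>
      simp [rowInd, colInd, ind, h2, h3, h4] <;> norm_num
lemma gterm_re_off {m : ℕ} (S : Fin m → Set (X × X)) (i : Fin m) {x y : X} (hxy : x ≠ y) :
    ((if x = y then rowInd (S i) x + colInd (S i) x else 0)
      - ind (S i) x y - ind (S i) y x).re ≤ 0 ∧
    -2 ≤ ((if x = y then rowInd (S i) x + colInd (S i) x else 0)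
      - ind (S i) x y - ind (S i) y x).re := by
  by_cases h4 : (x, y) ∈ S i <;> by_cases h5 : (y, x) ∈ S i <;>
    simp [ind, hxy, h4, h5] <;> norm_num

lemma inv4m_cast (m : ℕ) : (4 * m : ℂ)⁻¹ = (((4 * m : ℝ)⁻¹ : ℝ) : ℂ) := by
  push_cast
  ring

lemma AMat_im {m : ℕ} (S : Fin m → Set (X × X)) (hPM : ∀ i, IsPM (S i)) (x y : X) :
    (AMat S x y).im = 0 := by
  rw [AMat_entry S hPM x y, inv4m_cast]
  rw [Complex.sub_im, Complex.mul_im]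
  simp only [Complex.ofReal_re, Complex.ofReal_im, zero_mul, add_zero]
  rw [Complex.im_sum, Finset.sum_congr rfl fun i _ => gterm_im S i x y]
  simp only [Finset.sum_const_zero, mul_zero, sub_zero]
  exact if01_im _

lemma AMat_re_eq {m : ℕ} (S : Fin m → Set (X × X)) (hPM : ∀ i, IsPM (S i)) (x y : X) :
    (AMat S x y).re = (if x = y then 1 else 0) - (4 * m : ℝ)⁻¹ *
      ∑ i, ((if x = y then rowInd (S i) x + colInd (S i) x else 0)
        - ind (S i) x y - ind (S i) y x).re := by
  rw [AMat_entry S hPM x y, inv4m_cast, Complex.sub_re, Complex.mul_re]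
  simp only [Complex.ofReal_re, Complex.ofReal_im, zero_mul, sub_zero, Complex.re_sum]
  congr 1
  by_cases h : x = y <;> simp [h]

lemma AMat_re_nonneg {m : ℕ} (hm : 0 < m) (S : Fin m → Set (X × X))
    (hPM : ∀ i, IsPM (S i)) (x y : X) : 0 ≤ (AMat S x y).re := by
  rw [AMat_re_eq S hPM x y]
  have hminv : (0 : ℝ) ≤ (4 * m : ℝ)⁻¹ := by positivity
  have hm' : (0 : ℝ) < m := by exact_mod_cast hm
  by_cases h : x = y
  · subst h
    have hub : ∑ i, ((if x = x then rowInd (S i) x + colInd (S i) x else 0)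
        - ind (S i) x x - ind (S i) x x).re ≤ 2 * m := by
      calc ∑ i, ((if x = x then rowInd (S i) x + colInd (S i) x else 0)
            - ind (S i) x x - ind (S i) x x).re
          ≤ ∑ _i : Fin m, (2 : ℝ) := by
            refine Finset.sum_le_sum fun i _ => ?_
            have := (gterm_re_diag S i x).2
            simpa using this
        _ = 2 * m := by simp [mul_comm]
    have h1 : (4 * m : ℝ)⁻¹ * ∑ i, ((if x = x then rowInd (S i) x + colInd (S i) x else 0)
        - ind (S i) x x - ind (S i) x x).re ≤ (4 * m : ℝ)⁻¹ * (2 * m) :=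
      mul_le_mul_of_nonneg_left hub hminv
    have h2 : (4 * m : ℝ)⁻¹ * (2 * m) ≤ 1 / 2 := by
      rw [inv_mul_le_iff₀ (by positivity)]
      nlinarith
    rw [if_pos rfl]
    linarith
  · have hneg : ∑ i, ((if x = y then rowInd (S i) x + colInd (S i) x else 0)
        - ind (S i) x y - ind (S i) y x).re ≤ 0 :=
      Finset.sum_nonpos fun i _ => (gterm_re_off S i h).1
    rw [if_neg h]
    nlinarith [mul_nonneg hminv (neg_nonneg.2 hneg)]

lemma AMat_symm {m : ℕ} (S : Fin m → Set (X × X)) (hPM : ∀ i, IsPM (S i)) (x y : X) :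
    AMat S x y = AMat S y x := by
  rw [AMat_entry S hPM x y, AMat_entry S hPM y x]
  by_cases h : x = y
  · subst h; rfl
  · simp only [if_neg h, if_neg (Ne.symm h)]
    have hss : ∑ i, ((0 : ℂ) - ind (S i) x y - ind (S i) y x)
        = ∑ i, ((0 : ℂ) - ind (S i) y x - ind (S i) x y) :=
      Finset.sum_congr rfl fun i _ => by ring
    rw [hss]

lemma AMat_star {m : ℕ} (S : Fin m → Set (X × X)) (hPM : ∀ i, IsPM (S i)) :
    matStar (AMat S) = AMat S := by
  ext x y
  show starRingEnd ℂ (AMat S y x) = AMat S x y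
  rw [AMat_symm S hPM y x]
  exact Complex.conj_eq_iff_im.2 (AMat_im S hPM x y)

lemma cuElem_AMat (hBG : BoundedGeometry X) {m : ℕ} (S : Fin m → Set (X × X))
    (hPM : ∀ i, IsPM (S i)) : CuElem (AMat S) := by
  refine cuElem_sub cuElem_one (cuElem_smul _ (cuElem_sum _ _ fun i _ => ?_))
  exact cuElem_mul hBG (cuElem_star (cuElem_bMat (hPM i).2.2)) (cuElem_bMat (hPM i).2.2)

lemma AMat_hasSum_row (hBG : BoundedGeometry X) {E : Set (X × X)} (hE : Controlled E)
    {m : ℕ} (S : Fin m → Set (X × X)) (hPM : ∀ i, IsPM (S i))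
    (hSsub : ∀ i, S i ⊆ E) (x : X) : HasSum (fun y => AMat S x y) 1 := by
  classical
  obtain ⟨N₁, hN₁⟩ := row_fin hBG hE
  obtain ⟨N₂, hN₂⟩ := col_fin hBG hE
  set sR : Finset X := (hN₁ x).1.toFinset with hsR
  set sC : Finset X := (hN₂ x).1.toFinset with hsC
  set s : Finset X := {x} ∪ sR ∪ sC with hs
  have hxs : x ∈ s := by simp [hs]
  have h0 : ∀ y ∉ s, AMat S x y = 0 := by
    intro y hy
    have hyx : x ≠ y := by rintro rfl; exact hy hxs
    have hyE : (x, y) ∉ E := fun hmem => hy (by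
      have hyR : y ∈ sR := (hN₁ x).1.mem_toFinset.2 hmem
      simp [hs, hyR])
    have hxE : (y, x) ∉ E := fun hmem => hy (by
      have hyC : y ∈ sC := (hN₂ x).1.mem_toFinset.2 hmem
      simp [hs, hyC])
    rw [AMat_entry S hPM x y]
    simp only [if_neg hyx]
    have : ∀ i : Fin m, ((0 : ℂ) - ind (S i) x y - ind (S i) y x) = 0 := by
      intro i
      have h1 : (x, y) ∉ S i := fun hc => hyE (hSsub i hc)
      have h2 : (y, x) ∉ S i := fun hc => hxE (hSsub i hc)
      simp [ind, h1, h2]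
    rw [Finset.sum_congr rfl fun i _ => this i]
    simp
  have hsum : ∑ y ∈ s, AMat S x y = 1 := by
    have hrow : ∀ i : Fin m, ∑ y ∈ s, ind (S i) x y = rowInd (S i) x := by
      intro i
      by_cases hex : ∃ y0, (x, y0) ∈ S i
      · obtain ⟨y0, hy0⟩ := hex
        have hy0s : y0 ∈ s := by
          have : y0 ∈ sR := (hN₁ x).1.mem_toFinset.2 (hSsub i hy0)
          simp [hs, this]
        rw [Finset.sum_eq_single_of_mem y0 hy0s]
        · simp [ind, hy0, rowInd, show ∃ y', (x, y') ∈ S i from ⟨y0, hy0⟩]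
        · intro y' _ hne
          have : (x, y') ∉ S i := fun hc => hne ((hPM i).1 x y' y0 hc hy0)
          simp [ind, this]
      · push_neg at hex
        rw [Finset.sum_eq_zero fun y' _ => by simp [ind, hex y']]
        simp [rowInd, hex]
    have hcol : ∀ i : Fin m, ∑ y ∈ s, ind (S i) y x = colInd (S i) x := by
      intro i
      by_cases hex : ∃ y0, (y0, x) ∈ S i
      · obtain ⟨y0, hy0⟩ := hex
        have hy0s : y0 ∈ s := by
          have : y0 ∈ sC := (hN₂ x).1.mem_toFinset.2 (hSsub i hy0)
          simp [hs, this]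
        rw [Finset.sum_eq_single_of_mem y0 hy0s]
        · simp [ind, hy0, colInd, show ∃ x', (x', x) ∈ S i from ⟨y0, hy0⟩]
        · intro y' _ hne
          have : (y', x) ∉ S i := fun hc => hne ((hPM i).2.1 y' y0 x hc hy0)
          simp [ind, this]
      · push_neg at hex
        rw [Finset.sum_eq_zero fun y' _ => by simp [ind, hex y']]
        simp [colInd, hex]
    calc ∑ y ∈ s, AMat S x y
        = ∑ y ∈ s, ((if x = y then 1 else 0) - (4 * m : ℂ)⁻¹ *
            ∑ i, ((if x = y then rowInd (S i) x + colInd (S i) x else 0)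
              - ind (S i) x y - ind (S i) y x)) :=
          Finset.sum_congr rfl fun y _ => AMat_entry S hPM x y
      _ = (∑ y ∈ s, if x = y then (1 : ℂ) else 0) - (4 * m : ℂ)⁻¹ *
            ∑ y ∈ s, ∑ i, ((if x = y then rowInd (S i) x + colInd (S i) x else 0)
              - ind (S i) x y - ind (S i) y x) := by
          rw [Finset.sum_sub_distrib, ← Finset.mul_sum]
      _ = 1 - (4 * m : ℂ)⁻¹ * ∑ i : Fin m, (∑ y ∈ s,
            ((if x = y then rowInd (S i) x + colInd (S i) x else 0)
              - ind (S i) x y - ind (S i) y x)) := by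
          rw [Finset.sum_ite_eq s x (fun _ => (1 : ℂ)), if_pos hxs, Finset.sum_comm]
      _ = 1 := by
          have : ∀ i : Fin m, ∑ y ∈ s,
              ((if x = y then rowInd (S i) x + colInd (S i) x else 0)
                - ind (S i) x y - ind (S i) y x) = 0 := by
            intro i
            rw [Finset.sum_sub_distrib, Finset.sum_sub_distrib]
            rw [Finset.sum_ite_eq s x (fun _ => rowInd (S i) x + colInd (S i) x), if_pos hxs]
            rw [hrow i, hcol i]
            ring
          rw [Finset.sum_congr rfl fun i _ => this i]
          simp
  have := hasSum_sum_of_ne_finset_zero (L := SummationFilter.unconditional X) (f := fun y => AMat S x y) (s := s) h0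
  rwa [hsum] at this

lemma cuElem_matPow (hBG : BoundedGeometry X) {A : X → X → ℂ} (hA : CuElem A) :
    ∀ k : ℕ, CuElem (matPow A k)
  | 0 => cuElem_one
  | k + 1 => cuElem_mul hBG hA (cuElem_matPow hBG hA k)

end AMat

section RepPow
variable [EMetricSpace X]
variable {H : Type*} [NormedAddCommGroup H] [InnerProductSpace ℂ H] [CompleteSpace H]
variable {π : (X → X → ℂ) → (H →L[ℂ] H)}

lemma rep_matPow (hBG : BoundedGeometry X) (hπ : IsRepresentation π)
    {A : X → X → ℂ} (hA : CuElem A) : ∀ k : ℕ, π (matPow A k) = (π A) ^ k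
  | 0 => by rw [show matPow A 0 = matOne from rfl, hπ.map_one, pow_zero]
  | k + 1 => by
    rw [show matPow A (k + 1) = matMul A (matPow A k) from rfl,
      hπ.map_mul A (matPow A k) hA (cuElem_matPow hBG hA k),
      rep_matPow hBG hπ hA k, pow_succ']

end RepPow

/-- If a space `X` has Property (T), then there are `A ∈ (A_X^+)_1`
and `0 ≤ δ < 1` such that for every representation `π` of `ℂ_u[X]`,
`‖π(A^k) - p_π‖ ≤ δ^k` for all `k ≥ 1`. -/
theorem statement0 {X : Type*} [EMetricSpace X] (hX : IsSpace X) (hT : HasPropertyT X) :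
    ∃ A : X → X → ℂ, MemAX A 1 ∧ (∀ x y : X, 0 ≤ (A x y).re ∧ (A x y).im = 0) ∧
      ∃ δ : ℝ, 0 ≤ δ ∧ δ < 1 ∧
        ∀ (H : Type) [NormedAddCommGroup H] [InnerProductSpace ℂ H] [CompleteSpace H]
          (π : (X → X → ℂ) → (H →L[ℂ] H)), IsRepresentation π →
          ∀ p : H →L[ℂ] H, IsOrthoProjOnto p (invariantSubmodule π) →
            ∀ k : ℕ, 1 ≤ k → ‖π (matPow A k) - p‖ ≤ δ ^ k := by
  classical
  obtain ⟨E, hEgen⟩ := hX.monogenic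
  obtain ⟨c, hc, hTprop⟩ := hT E hEgen
  obtain ⟨m, S, hm, hPM, hSsub, hcover⟩ := exists_cover hX.boundedGeometry hEgen.1
  have hBG := hX.boundedGeometry
  have hm' : (0 : ℝ) < m := by exact_mod_cast hm
  have hminv : (0 : ℝ) ≤ (4 * m : ℝ)⁻¹ := by positivity
  set A := AMat S with hAdef
  have hAcu : CuElem A := cuElem_AMat hBG S hPM
  refine ⟨A, ⟨hAcu, fun x => ⟨?_, ?_⟩⟩,
    fun x y => ⟨AMat_re_nonneg hm S hPM x y, AMat_im S hPM x y⟩, ?_⟩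
  · exact AMat_hasSum_row hBG hEgen.1 S hPM hSsub x
  · have hcol : (fun y => A y x) = fun y => A x y :=
      funext fun y => (AMat_symm S hPM y x)
    rw [hcol]
    exact AMat_hasSum_row hBG hEgen.1 S hPM hSsub x
  set ε : ℝ := min 1 (c ^ 2 / (4 * (m : ℝ) ^ 2)) with hεdef
  have hε0 : 0 < ε := lt_min one_pos (by positivity)
  have hε1 : ε ≤ 1 := min_le_left _ _
  refine ⟨1 - ε, by linarith, by linarith, ?_⟩
  intro H _ _ _ π hπ p hp k hk
  set K := invariantSubmodule π with hKdef
  set T := π A with hTdef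
  set B : Fin m → X → X → ℂ := fun i => bMat (S i) with hBdef
  set β : Fin m → X → X → ℂ := fun i => matMul (matStar (B i)) (B i) with hβdef
  have hcuB : ∀ i, CuElem (B i) := fun i => cuElem_bMat (hPM i).2.2
  have hcuβ : ∀ i, CuElem (β i) := fun i =>
    cuElem_mul hBG (cuElem_star (hcuB i)) (hcuB i)
  have hcuSS : CuElem (∑ i, β i) := cuElem_sum _ _ fun i _ => hcuβ i
  have hTop_eq : T = 1 - (4 * m : ℂ)⁻¹ • ∑ i, π (β i) := by
    calc T = π (matOne - (4 * m : ℂ)⁻¹ • ∑ i, β i) := rfl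
      _ = π matOne - π ((4 * m : ℂ)⁻¹ • ∑ i, β i) :=
          rep_sub hπ cuElem_one (cuElem_smul _ hcuSS)
      _ = 1 - (4 * m : ℂ)⁻¹ • π (∑ i, β i) := by
          rw [hπ.map_one, hπ.map_smul _ _ hcuSS]
      _ = 1 - (4 * m : ℂ)⁻¹ • ∑ i, π (β i) := by
          rw [rep_sum hπ _ _ fun i => hcuβ i]
  have happly : ∀ ξ : H, T ξ = ξ - (4 * m : ℂ)⁻¹ • ∑ i, π (β i) ξ := by
    intro ξ
    rw [hTop_eq]
    simp [ContinuousLinearMap.sub_apply, ContinuousLinearMap.smul_apply,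
      ContinuousLinearMap.sum_apply, ContinuousLinearMap.one_apply]
  have hβapp : ∀ (i : Fin m) (ξ : H),
      π (β i) ξ = ContinuousLinearMap.adjoint (π (B i)) (π (B i) ξ) := by
    intro i ξ
    rw [show β i = matMul (matStar (B i)) (B i) from rfl,
      hπ.map_mul _ _ (cuElem_star (hcuB i)) (hcuB i), hπ.map_star _ (hcuB i)]
    rfl
  have hinnerβ : ∀ (i : Fin m) (ξ : H),
      (inner ℂ ξ (π (β i) ξ) : ℂ) = ((‖π (B i) ξ‖ ^ 2 : ℝ) : ℂ) := by
    intro i ξ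
    rw [hβapp i ξ, ContinuousLinearMap.adjoint_inner_right,
      inner_self_eq_norm_sq_to_K]
    norm_cast
  have hquadeq : ∀ ξ : H, RCLike.re (inner ℂ ξ (T ξ) : ℂ)
      = ‖ξ‖ ^ 2 - (4 * m : ℝ)⁻¹ * ∑ i, ‖π (B i) ξ‖ ^ 2 := by
    intro ξ
    have h1 : (inner ℂ ξ (T ξ) : ℂ)
        = inner ℂ ξ ξ - (4 * m : ℂ)⁻¹ * ∑ i, (inner ℂ ξ (π (β i) ξ) : ℂ) := by
      rw [happly ξ, inner_sub_right, inner_smul_right, inner_sum]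
    have h2 : ∑ i, (inner ℂ ξ (π (β i) ξ) : ℂ)
        = ((∑ i, ‖π (B i) ξ‖ ^ 2 : ℝ) : ℂ) := by
      rw [Finset.sum_congr rfl fun i _ => hinnerβ i ξ]
      rw [Complex.ofReal_sum]
    rw [h1, h2, inv4m_cast, map_sub, inner_self_eq_norm_sq]
    congr 1
    simp only [RCLike.re_to_complex, Complex.re_ofReal_mul, Complex.ofReal_re]
  have hidem_row : ∀ S₀ : Set (X × X),
      matMul (diag (rowInd S₀)) (diag (rowInd S₀)) = diag (rowInd S₀) := by
    intro S₀
    rw [matMul_diag_left]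
    ext x y
    by_cases h : x = y
    · subst h
      rcases rowInd01 S₀ x with h1 | h1 <;> simp [diag, h1]
    · simp [diag, h]
  have hnormB : ∀ (i : Fin m) (ξ : H), ‖π (B i) ξ‖ ≤ 2 * ‖ξ‖ := by
    intro i ξ
    have hBsplit : π (B i) ξ = π (diag (rowInd (S i))) ξ - π (ind (S i)) ξ := by
      rw [show B i = diag (rowInd (S i)) - ind (S i) from rfl,
        rep_sub hπ (cuElem_rowInd _) (cuElem_ind (hPM i).2.2)]
      simp
    rw [hBsplit]
    calc ‖π (diag (rowInd (S i))) ξ - π (ind (S i)) ξ‖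
        ≤ ‖π (diag (rowInd (S i))) ξ‖ + ‖π (ind (S i)) ξ‖ := norm_sub_le _ _
      _ ≤ ‖ξ‖ + ‖ξ‖ := add_le_add
          (rep_proj_contraction hπ (cuElem_rowInd _) (matStar_rowInd _) (hidem_row _) ξ)
          (rep_pm_contraction hπ (hPM i) ξ)
      _ = 2 * ‖ξ‖ := by ring
  have hlow : ∀ ξ : H, 0 ≤ RCLike.re (inner ℂ ξ (T ξ) : ℂ) := by
    intro ξ
    rw [hquadeq ξ]
    have hSig : ∑ i, ‖π (B i) ξ‖ ^ 2 ≤ 4 * m * ‖ξ‖ ^ 2 := by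
      calc ∑ i, ‖π (B i) ξ‖ ^ 2 ≤ ∑ _i : Fin m, (2 * ‖ξ‖) ^ 2 :=
            Finset.sum_le_sum fun i _ =>
              pow_le_pow_left₀ (norm_nonneg _) (hnormB i ξ) 2
        _ = m * (2 * ‖ξ‖) ^ 2 := by simp [mul_comm]
        _ = 4 * m * ‖ξ‖ ^ 2 := by ring
    have heq : (4 * (m : ℝ))⁻¹ * (4 * m * ‖ξ‖ ^ 2) = ‖ξ‖ ^ 2 := by
      field_simp
    have := mul_le_mul_of_nonneg_left hSig hminv
    linarith [this.trans_eq heq]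
  have hfix : ∀ w ∈ K, T w = w := by
    intro w hw
    have hb0 : ∀ i, π (B i) w = 0 := by
      intro i
      have hvpt := ind_isPartialTranslation (hPM i)
      have hinv : π (ind (S i)) w
          = π (matMul (ind (S i)) (matStar (ind (S i)))) w := hw (ind (S i)) hvpt
      have heq : matMul (ind (S i)) (matStar (ind (S i))) = diag (rowInd (S i)) :=
        matMul_ind_star (S i) (hPM i)
      have hsplit : π (B i) w = π (diag (rowInd (S i))) w - π (ind (S i)) w := by
        rw [show B i = diag (rowInd (S i)) - ind (S i) from rfl,
          rep_sub hπ (cuElem_rowInd _) (cuElem_ind (hPM i).2.2)]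
        simp
      rw [hsplit, ← heq, ← hinv]
      simp
    have hβ0 : ∀ i, π (β i) w = 0 := by
      intro i
      rw [hβapp i w, hb0 i]
      simp
    rw [happly w, Finset.sum_congr rfl fun i _ => hβ0 i]
    simp
  have hsa : ∀ ξ η : H, (inner ℂ (T ξ) η : ℂ) = inner ℂ ξ (T η) := by
    have hadj : ContinuousLinearMap.adjoint T = T := by
      rw [hTdef, hAdef, ← hπ.map_star _ hAcu, AMat_star S hPM]
    intro ξ η
    conv_lhs => rw [← hadj]
    exact ContinuousLinearMap.adjoint_inner_left _ _ _
  have hKinv : ∀ ξ ∈ Kᗮ, T ξ ∈ Kᗮ := by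
    intro ξ hξ
    rw [Submodule.mem_orthogonal]
    intro u hu
    rw [← hsa u ξ, hfix u hu]
    exact (Submodule.mem_orthogonal K ξ).1 hξ u hu
  have hub : ∀ ξ ∈ Kᗮ, RCLike.re (inner ℂ ξ (T ξ) : ℂ) ≤ (1 - ε) * ‖ξ‖ ^ 2 := by
    intro ξ hξ
    obtain ⟨v, hvpt, hvsupp, hineq⟩ := hTprop H π hπ ξ hξ
    set S' := matSupport v with hS'def
    have hveq : v = ind S' := by
      funext x y
      rcases hvpt.1 x y with h0 | h1
      · have hnmem : (x, y) ∉ S' := by simp [hS'def, matSupport, h0]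
        simp [ind, hnmem, h0]
      · have hmem : (x, y) ∈ S' := by simp [hS'def, matSupport, h1]
        simp [ind, hmem, h1]
    have hmem_one : ∀ x y : X, (x, y) ∈ S' → v x y = 1 := by
      intro x y hmem
      rcases hvpt.1 x y with h0 | h1
      · exact absurd h0 (by simpa [hS'def, matSupport] using hmem)
      · exact h1
    have hS'PM : IsPM S' := by
      refine ⟨fun x y y' h1 h2 => ?_, fun x x' y h1 h2 => ?_, hvpt.2.2.2⟩
      · exact hvpt.2.1 x y y' (hmem_one x y h1) (hmem_one x y' h2)
      · exact hvpt.2.2.1 x x' y (hmem_one x y h1) (hmem_one x' y h2)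
    have hS'sub : S' ⊆ ⋃ i, S i := fun pp hpp => hcover (hvsupp hpp)
    obtain ⟨e, he01, hdec⟩ := decomp S hPM S' hS'PM hS'sub
    have hcue : ∀ i, CuElem (diag (e i)) := fun i =>
      cuElem_diag _ 1 fun x => by rcases he01 i x with h | h <;> simp [h]
    have hterm : ∀ i, CuElem (matMul (diag (e i)) (B i)) := fun i =>
      cuElem_mul hBG (hcue i) (hcuB i)
    have hrepdec : π (bMat S') ξ = ∑ i, π (diag (e i)) (π (B i) ξ) := by
      rw [hdec, rep_sum hπ _ _ hterm, ContinuousLinearMap.sum_apply]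
      refine Finset.sum_congr rfl fun i _ => ?_
      rw [hπ.map_mul _ _ (hcue i) (hcuB i)]
      rfl
    have hnormdec : ‖π (bMat S') ξ‖ ≤ ∑ i, ‖π (B i) ξ‖ := by
      rw [hrepdec]
      refine (norm_sum_le _ _).trans (Finset.sum_le_sum fun i _ => ?_)
      refine rep_proj_contraction hπ (hcue i) ?_ ?_ _
      · exact matStar_diag_real _ fun x => by rcases he01 i x with h | h <;> simp [h]
      · rw [matMul_diag_left]
        ext x y
        by_cases h : x = y
        · subst h
          rcases he01 i x with h1 | h1 <;> simp [diag, h1]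
        · simp [diag, h]
    have hbv : π v ξ - π (matMul v (matStar v)) ξ = -(π (bMat S') ξ) := by
      have h1 : matMul v (matStar v) = diag (rowInd S') := by
        rw [hveq]
        exact matMul_ind_star S' hS'PM
      have h2 : π (bMat S') ξ = π (diag (rowInd S')) ξ - π (ind S') ξ := by
        rw [show bMat S' = diag (rowInd S') - ind S' from rfl,
          rep_sub hπ (cuElem_rowInd _) (cuElem_ind hS'PM.2.2)]
        simp
      rw [h1, h2]
      rw [hveq]
      abel
    have hineq' : c * ‖ξ‖ ≤ ∑ i, ‖π (B i) ξ‖ := by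
      calc c * ‖ξ‖ ≤ ‖π v ξ - π (matMul v (matStar v)) ξ‖ := hineq
        _ = ‖π (bMat S') ξ‖ := by rw [hbv, norm_neg]
        _ ≤ _ := hnormdec
    have hCS : (c * ‖ξ‖) ^ 2 ≤ m * ∑ i, ‖π (B i) ξ‖ ^ 2 := by
      calc (c * ‖ξ‖) ^ 2 ≤ (∑ i, ‖π (B i) ξ‖) ^ 2 :=
            pow_le_pow_left₀ (mul_nonneg hc.le (norm_nonneg _)) hineq' 2
        _ ≤ (Finset.univ.card : ℝ) * ∑ i, ‖π (B i) ξ‖ ^ 2 := sq_sum_le_card_mul_sum_sq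
        _ = m * ∑ i, ‖π (B i) ξ‖ ^ 2 := by
            simp [Finset.card_univ]
    rw [hquadeq ξ]
    have hεle : ε ≤ c ^ 2 / (4 * (m : ℝ) ^ 2) := min_le_right _ _
    have hSig : c ^ 2 * ‖ξ‖ ^ 2 / m ≤ ∑ i, ‖π (B i) ξ‖ ^ 2 := by
      rw [div_le_iff₀ hm']
      nlinarith [hCS]
    have h1 : (4 * (m : ℝ))⁻¹ * (c ^ 2 * ‖ξ‖ ^ 2 / m)
        = c ^ 2 / (4 * (m : ℝ) ^ 2) * ‖ξ‖ ^ 2 := by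
      have hm0 : (m : ℝ) ≠ 0 := ne_of_gt hm'
      field_simp
    have h2 : (4 * (m : ℝ))⁻¹ * (c ^ 2 * ‖ξ‖ ^ 2 / m)
        ≤ (4 * (m : ℝ))⁻¹ * ∑ i, ‖π (B i) ξ‖ ^ 2 :=
      mul_le_mul_of_nonneg_left hSig hminv
    have h3 : ε * ‖ξ‖ ^ 2 ≤ c ^ 2 / (4 * (m : ℝ) ^ 2) * ‖ξ‖ ^ 2 :=
      mul_le_mul_of_nonneg_right hεle (sq_nonneg _)
    linarith
  have hδ0 : (0 : ℝ) ≤ 1 - ε := by linarith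
  have hcs : ∀ ξ ∈ Kᗮ, ‖T ξ‖ ≤ (1 - ε) * ‖ξ‖ :=
    cs_contraction T Kᗮ hδ0 hsa (fun ξ hξ => ⟨hlow ξ, hub ξ hξ⟩) hKinv
  have hpowbound : ∀ j : ℕ, ∀ w ∈ Kᗮ,
      (T ^ j) w ∈ Kᗮ ∧ ‖(T ^ j) w‖ ≤ (1 - ε) ^ j * ‖w‖ := by
    intro j
    induction j with
    | zero =>
      intro w hw
      simp only [pow_zero, ContinuousLinearMap.one_apply]
      exact ⟨hw, by simp⟩
    | succ n ih =>
      intro w hw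
      have h1 := ih w hw
      have hTn : (T ^ (n + 1)) w = T ((T ^ n) w) := by
        rw [pow_succ']
        rfl
      constructor
      · rw [hTn]
        exact hKinv _ h1.1
      · rw [hTn]
        calc ‖T ((T ^ n) w)‖ ≤ (1 - ε) * ‖(T ^ n) w‖ := hcs _ h1.1
          _ ≤ (1 - ε) * ((1 - ε) ^ n * ‖w‖) :=
              mul_le_mul_of_nonneg_left h1.2 hδ0
          _ = (1 - ε) ^ (n + 1) * ‖w‖ := by ring
  have hfixpow : ∀ j : ℕ, ∀ w ∈ K, (T ^ j) w = w := by
    intro j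
    induction j with
    | zero => intro w hw; simp
    | succ n ih =>
      intro w hw
      have hTn : (T ^ (n + 1)) w = T ((T ^ n) w) := by
        rw [pow_succ']
        rfl
      rw [hTn, ih w hw, hfix w hw]
  rw [rep_matPow hBG hπ hAcu k]
  refine ContinuousLinearMap.opNorm_le_bound _ (pow_nonneg hδ0 k) fun ζ => ?_
  obtain ⟨hpK, hpO⟩ := hp ζ
  have hdecζ : (T ^ k - p) ζ = (T ^ k) (ζ - p ζ) := by
    have hsplit : (T ^ k) ζ = (T ^ k) (p ζ) + (T ^ k) (ζ - p ζ) := by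
      rw [← map_add]
      congr 1
      abel
    rw [ContinuousLinearMap.sub_apply, hsplit, hfixpow k (p ζ) hpK]
    abel
  rw [hdecζ]
  have hb := (hpowbound k (ζ - p ζ) hpO).2
  have hno : ‖ζ - p ζ‖ ≤ ‖ζ‖ := by
    have hip : RCLike.re (inner ℂ (p ζ) (ζ - p ζ) : ℂ) = 0 := by
      rw [(Submodule.mem_orthogonal K (ζ - p ζ)).1 hpO (p ζ) hpK]
      simp
    have hns := norm_add_sq (𝕜 := ℂ) (p ζ) (ζ - p ζ)
    rw [hip] at hns
    have hsum : p ζ + (ζ - p ζ) = ζ := by abel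
    rw [hsum] at hns
    nlinarith [norm_nonneg (p ζ), norm_nonneg (ζ - p ζ), norm_nonneg ζ]
  calc ‖(T ^ k) (ζ - p ζ)‖ ≤ (1 - ε) ^ k * ‖ζ - p ζ‖ := hb
    _ ≤ (1 - ε) ^ k * ‖ζ‖ := mul_le_mul_of_nonneg_left hno (pow_nonneg hδ0 k)


end GeomPropT
end
end

section
/- Let X be a finite nonempty metric space (with finite-valued distance, so that X is a finite, coarsely connected space). Then X has Property (T), and the matrix P ∈ ℂ_u[X] defined by P_{x,y} = 1/|X| for all x,y ∈ X satisfies: for every representation π of ℂ_u[X] on a complex Hilbert space H, π(P) is the orthogonal projection of H onto the subspace H^π of invariant vectors. -/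
open scoped ENNReal Classical

noncomputable section

namespace GeomPropT

variable {X : Type*}

variable {H : Type*} [NormedAddCommGroup H] [InnerProductSpace ℂ H]

section Aux

variable {X : Type*} [EMetricSpace X]

lemma controlled_of_finite [Finite X] (hcc : ∀ x y : X, edist x y < ⊤)
    (E : Set (X × X)) : Controlled E := by
  haveI : Fintype X := Fintype.ofFinite X
  refine ⟨(Finset.univ : Finset (X × X)).sup (fun p => edist p.1 p.2), ?_, ?_⟩
  · rw [Finset.sup_lt_iff (by simp : (⊥ : ℝ≥0∞) < ⊤)]
    exact fun p _ => hcc p.1 p.2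
  · intro p _
    exact Finset.le_sup (f := fun p : X × X => edist p.1 p.2) (Finset.mem_univ p)

lemma cuElem_all [Finite X] (hcc : ∀ x y : X, edist x y < ⊤)
    (T : X → X → ℂ) : CuElem T := by
  refine ⟨?_, controlled_of_finite hcc _⟩
  obtain ⟨M, hM⟩ := Finite.exists_le (fun p : X × X => ‖T p.1 p.2‖)
  exact ⟨M, fun x y => hM (x, y)⟩

/-- Elementary matrix with a single `1` entry at `(a, b)`. -/
def elem (a b : X) : X → X → ℂ := fun x y => if x = a ∧ y = b then 1 else 0

lemma matStar_elem (a b : X) : matStar (elem a b) = elem b a := by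
  funext x y
  simp only [matStar, elem]
  by_cases h : x = b ∧ y = a
  · rw [if_pos ⟨h.2, h.1⟩, if_pos h]; simp
  · rw [if_neg (fun hc => h ⟨hc.2, hc.1⟩), if_neg h]; simp

lemma matMul_elem [Finite X] (a b c d : X) :
    matMul (elem a b) (elem c d) = if b = c then elem a d else 0 := by
  haveI : Fintype X := Fintype.ofFinite X
  funext x y
  simp only [matMul, tsum_fintype]
  have : ∀ z : X, elem a b x z * elem c d z y
      = if z = b then (if (b = c ∧ x = a) ∧ y = d then 1 else 0) else 0 := by
    intro z
    simp only [elem]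
    by_cases hz : z = b <;> by_cases hx : x = a <;> by_cases hy : y = d <;>
      by_cases hbc : b = c <;> simp_all <;> tauto
  rw [Finset.sum_congr rfl fun z _ => this z, Finset.sum_ite_eq' Finset.univ b]
  simp only [Finset.mem_univ, if_true]
  by_cases hbc : b = c <;> simp [elem, hbc] <;> tauto

lemma isPT_elem [Finite X] (hcc : ∀ x y : X, edist x y < ⊤) (a b : X) :
    IsPartialTranslation (elem a b) := by
  refine ⟨fun x y => ?_, fun x y y' h h' => ?_, fun x x' y h h' => ?_,
    controlled_of_finite hcc _⟩
  · by_cases h : x = a ∧ y = b <;> simp [elem, h]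
  · simp only [elem] at h h'
    by_cases h1 : x = a ∧ y = b
    · by_cases h2 : x = a ∧ y' = b
      · rw [h1.2, h2.2]
      · simp [h2] at h'
    · simp [h1] at h
  · simp only [elem] at h h'
    by_cases h1 : x = a ∧ y = b
    · by_cases h2 : x' = a ∧ y = b
      · rw [h1.1, h2.1]
      · simp [h2] at h'
    · simp [h1] at h

lemma isPT_zero : IsPartialTranslation (0 : X → X → ℂ) := by
  refine ⟨fun x y => Or.inl rfl, fun x y y' h _ => by simp at h,
    fun x x' y h _ => by simp at h, ⟨0, by simp, ?_⟩⟩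
  intro p hp
  simp [matSupport] at hp

lemma matSupport_elem (a b : X) : matSupport (elem a b) ⊆ {(a, b)} := by
  intro p hp
  simp only [matSupport, elem, Set.mem_setOf_eq] at hp
  by_cases h : p.1 = a ∧ p.2 = b
  · have : p = (a, b) := Prod.ext h.1 h.2
    simp [this]
  · simp [h] at hp

lemma sum_elem_diag [Fintype X] : ∑ a : X, elem a a = matOne (X := X) := by
  funext x y
  have : ∀ a : X, elem a a x y = if a = x then (if x = y then (1:ℂ) else 0) else 0 := by
    intro a
    simp only [elem]
    by_cases h1 : a = x <;> by_cases h2 : x = y <;> simp_all <;> tauto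
  rw [Finset.sum_apply, Finset.sum_apply]
  calc (∑ a : X, elem a a x y) = ∑ a : X, if a = x then (if x = y then (1:ℂ) else 0) else 0 :=
        Finset.sum_congr rfl fun a _ => this a
    _ = if x = y then (1:ℂ) else 0 := by rw [Finset.sum_ite_eq' Finset.univ x]; simp
    _ = matOne x y := rfl

end Aux
/-- The constant matrix with entries `1/|X|`. -/
def Pmat (X : Type*) : X → X → ℂ := fun _ _ => ((Nat.card X : ℂ))⁻¹

section PmatLemmas

variable {X : Type*} [EMetricSpace X] [Fintype X] [Nonempty X]

lemma natCard_ne_zero' : (Nat.card X : ℂ) ≠ 0 := by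
  simp [Nat.card_eq_fintype_card, Fintype.card_ne_zero]

lemma Pmat_eq : Pmat X = ((Nat.card X : ℂ))⁻¹ • ∑ a : X, ∑ b : X, elem a b := by
  funext x y
  have h : (∑ a : X, ∑ b : X, elem a b) x y = 1 := by
    rw [Finset.sum_apply, Finset.sum_apply]
    have : ∀ a : X, (∑ b : X, elem a b) x y = if a = x then (1:ℂ) else 0 := by
      intro a
      rw [Finset.sum_apply, Finset.sum_apply]
      have : ∀ b : X, elem a b x y = if b = y then (if a = x then (1:ℂ) else 0) else 0 := by
        intro b
        simp only [elem]
        by_cases h1 : b = y <;> by_cases h2 : a = x <;> simp_all <;> tauto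
      rw [Finset.sum_congr rfl fun b _ => this b, Finset.sum_ite_eq' Finset.univ y]
      simp
    rw [Finset.sum_congr rfl fun a _ => this a, Finset.sum_ite_eq' Finset.univ x]
    simp
  simp only [Pi.smul_apply, h, Pmat, smul_eq_mul, mul_one]

lemma matStar_Pmat : matStar (Pmat X) = Pmat X := by
  funext x y
  simp [matStar, Pmat]

lemma matMul_Pmat_Pmat : matMul (Pmat X) (Pmat X) = Pmat X := by
  funext x y
  simp only [matMul, tsum_fintype, Pmat]
  rw [Finset.sum_const, Finset.card_univ, nsmul_eq_mul, ← Nat.card_eq_fintype_card]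
  field_simp [natCard_ne_zero' (X := X)]

lemma matMul_PT_Pmat {v : X → X → ℂ} (hv : IsPartialTranslation v) :
    matMul v (Pmat X) = matMul (matMul v (matStar v)) (Pmat X) := by
  funext x y
  simp only [matMul, tsum_fintype, matStar, Pmat]
  rw [← Finset.sum_mul, ← Finset.sum_mul]
  congr 1
  rw [Finset.sum_comm]
  have key : ∀ w : X, (∑ z : X, v x w * (starRingEnd ℂ) (v z w)) = v x w := by
    intro w
    rcases hv.1 x w with h0 | h1
    · simp [h0]
    · rw [h1]
      simp only [one_mul]
      rw [Finset.sum_eq_single x]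
      · simp [h1]
      · intro z _ hz
        rcases hv.1 z w with h0' | h1'
        · simp [h0']
        · exact absurd (hv.2.2.1 z x w h1' h1) hz
      · simp
  calc (∑ z : X, v x z) = ∑ w : X, v x w := rfl
    _ = ∑ w : X, ∑ z : X, v x w * (starRingEnd ℂ) (v z w) :=
        Finset.sum_congr rfl fun w _ => (key w).symm

end PmatLemmas

section RepLemmas

variable {X : Type*} [EMetricSpace X] [Fintype X] [Nonempty X]
variable {H : Type*} [NormedAddCommGroup H] [InnerProductSpace ℂ H] [CompleteSpace H]
variable {π : (X → X → ℂ) → (H →L[ℂ] H)}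

lemma rep_map_zero (hcc : ∀ x y : X, edist x y < ⊤) (hπ : IsRepresentation π) :
    π 0 = 0 := by
  have := hπ.map_add 0 0 (cuElem_all hcc 0) (cuElem_all hcc 0)
  rw [add_zero] at this
  exact left_eq_add.mp this

lemma rep_map_sum (hcc : ∀ x y : X, edist x y < ⊤) (hπ : IsRepresentation π)
    {ι : Type*} (s : Finset ι) (f : ι → X → X → ℂ) :
    π (∑ i ∈ s, f i) = ∑ i ∈ s, π (f i) := by
  classical
  induction s using Finset.induction_on with
  | empty => simpa using rep_map_zero hcc hπ
  | insert _ _ hx ih =>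
    rw [Finset.sum_insert hx, Finset.sum_insert hx,
      hπ.map_add _ _ (cuElem_all hcc _) (cuElem_all hcc _), ih]

end RepLemmas
section HilbLemmas

variable {X : Type*} [EMetricSpace X] [Fintype X] [Nonempty X]
variable {H : Type*} [NormedAddCommGroup H] [InnerProductSpace ℂ H] [CompleteSpace H]
variable {π : (X → X → ℂ) → (H →L[ℂ] H)}

open ContinuousLinearMap in
/-- A self-adjoint idempotent operator is a contraction at every vector. -/
lemma norm_proj_apply_le {Q : H →L[ℂ] H} (hs : adjoint Q = Q) (hi : Q * Q = Q)
    (η : H) : ‖Q η‖ ≤ ‖η‖ := by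
  have hQQ : Q (Q η) = Q η := by
    have := congrArg (fun T => T η) hi
    simpa [ContinuousLinearMap.mul_apply] using this
  have e : (inner ℂ (Q η) (Q η) : ℂ) = inner ℂ η (Q η) := by
    calc (inner ℂ (Q η) (Q η) : ℂ) = inner ℂ η (adjoint Q (Q η)) :=
          (ContinuousLinearMap.adjoint_inner_right Q η (Q η)).symm
      _ = inner ℂ η (Q (Q η)) := by rw [hs]
      _ = inner ℂ η (Q η) := by rw [hQQ]
  have h1 : ‖Q η‖ ^ 2 = (inner ℂ (η : H) (Q η) : ℂ).re := by
    have := (inner_self_eq_norm_sq_to_K (𝕜 := ℂ) (Q η)).symm.trans e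
    rw [← this]
    norm_cast
  have h2 : (inner ℂ (η : H) (Q η) : ℂ).re ≤ ‖η‖ * ‖Q η‖ := by
    calc (inner ℂ (η : H) (Q η) : ℂ).re ≤ ‖(inner ℂ (η : H) (Q η) : ℂ)‖ :=
          Complex.re_le_norm _
      _ ≤ ‖η‖ * ‖Q η‖ := by
          simpa using norm_inner_le_norm (𝕜 := ℂ) η (Q η)
  nlinarith [norm_nonneg (Q η), norm_nonneg η, sq_nonneg (‖Q η‖ - ‖η‖)]

open ContinuousLinearMap in
lemma norm_pi_elem_apply_le (hcc : ∀ x y : X, edist x y < ⊤)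
    (hπ : IsRepresentation π) (a b : X) (η : H) :
    ‖π (elem a b) η‖ ≤ ‖η‖ := by
  set A := π (elem a b)
  set Q := π (elem b b) with hQdef
  have hQs : adjoint Q = Q := by
    rw [← hπ.map_star _ (cuElem_all hcc _), matStar_elem, hQdef]
  have hQi : Q * Q = Q := by
    rw [hQdef, ← hπ.map_mul _ _ (cuElem_all hcc _) (cuElem_all hcc _),
      matMul_elem, if_pos rfl]
  have hAA : adjoint A * A = Q := by
    rw [← hπ.map_star _ (cuElem_all hcc _), ← hπ.map_mul _ _ (cuElem_all hcc _)
      (cuElem_all hcc _), matStar_elem, matMul_elem, if_pos rfl]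
  have e1 : (inner ℂ (A η) (A η) : ℂ) = inner ℂ η (Q η) := by
    calc (inner ℂ (A η) (A η) : ℂ) = inner ℂ η (adjoint A (A η)) :=
          (ContinuousLinearMap.adjoint_inner_right A η (A η)).symm
      _ = inner ℂ η ((adjoint A * A) η) := rfl
      _ = inner ℂ η (Q η) := by rw [hAA]
  have e2 : (inner ℂ (Q η) (Q η) : ℂ) = inner ℂ η (Q η) := by
    calc (inner ℂ (Q η) (Q η) : ℂ) = inner ℂ η (adjoint Q (Q η)) :=
          (ContinuousLinearMap.adjoint_inner_right Q η (Q η)).symm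
      _ = inner ℂ η (Q (Q η)) := by rw [hQs]
      _ = inner ℂ η ((Q * Q) η) := rfl
      _ = inner ℂ η (Q η) := by rw [hQi]
  have h1 : ‖A η‖ ^ 2 = ‖Q η‖ ^ 2 := by
    have := ((inner_self_eq_norm_sq_to_K (𝕜 := ℂ) (A η)).symm.trans
      (e1.trans e2.symm)).trans (inner_self_eq_norm_sq_to_K (𝕜 := ℂ) (Q η))
    exact_mod_cast this
  have h2 : ‖Q η‖ ≤ ‖η‖ := norm_proj_apply_le hQs hQi η
  nlinarith [norm_nonneg (A η), norm_nonneg (Q η)]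

lemma piP_eq (hcc : ∀ x y : X, edist x y < ⊤) (hπ : IsRepresentation π) :
    π (Pmat X) = ((Nat.card X : ℂ))⁻¹ • ∑ a : X, ∑ b : X, π (elem a b) := by
  rw [Pmat_eq, hπ.map_smul _ _ (cuElem_all hcc _), rep_map_sum hcc hπ]
  congr 1
  exact Finset.sum_congr rfl fun a _ => rep_map_sum hcc hπ _ _

lemma pi_elem_of_invariant (hcc : ∀ x y : X, edist x y < ⊤)
    (hπ : IsRepresentation π) {η : H} (hη : η ∈ invariantSubmodule π) (a b : X) :
    π (elem a b) η = π (elem a a) η := by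
  have h := hη (elem a b) (isPT_elem hcc a b)
  rwa [matStar_elem, matMul_elem, if_pos rfl] at h

lemma sum_diag_apply (hcc : ∀ x y : X, edist x y < ⊤) (hπ : IsRepresentation π)
    (ξ : H) : ∑ a : X, π (elem a a) ξ = ξ := by
  have : (∑ a : X, π (elem a a)) = π matOne := by
    rw [← rep_map_sum hcc hπ, sum_elem_diag]
  calc ∑ a : X, π (elem a a) ξ = (∑ a : X, π (elem a a)) ξ := by
        rw [ContinuousLinearMap.sum_apply]
    _ = π matOne ξ := by rw [this]
    _ = ξ := by rw [hπ.map_one]; rfl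

lemma piP_fix (hcc : ∀ x y : X, edist x y < ⊤) (hπ : IsRepresentation π)
    {η : H} (hη : η ∈ invariantSubmodule π) : π (Pmat X) η = η := by
  have hn : (Nat.card X : ℂ) ≠ 0 := natCard_ne_zero'
  calc π (Pmat X) η
      = ((Nat.card X : ℂ))⁻¹ • ∑ a : X, ∑ b : X, π (elem a b) η := by
        rw [piP_eq hcc hπ]
        simp [ContinuousLinearMap.sum_apply]
    _ = ((Nat.card X : ℂ))⁻¹ • ∑ a : X, (Nat.card X : ℂ) • π (elem a a) η := by
        congr 1
        refine Finset.sum_congr rfl fun a _ => ?_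
        rw [Finset.sum_congr rfl fun b _ => pi_elem_of_invariant hcc hπ hη a b,
          Finset.sum_const, Finset.card_univ, ← Nat.card_eq_fintype_card,
          ← Nat.cast_smul_eq_nsmul ℂ]
    _ = ∑ a : X, π (elem a a) η := by
        rw [Finset.smul_sum]
        refine Finset.sum_congr rfl fun a _ => ?_
        rw [smul_smul, inv_mul_cancel₀ hn, one_smul]
    _ = η := sum_diag_apply hcc hπ η

lemma piP_mem_invariant (hcc : ∀ x y : X, edist x y < ⊤) (hπ : IsRepresentation π)
    (ξ : H) : π (Pmat X) ξ ∈ invariantSubmodule π := by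
  intro v hv
  have h1 : π v (π (Pmat X) ξ) = π (matMul v (Pmat X)) ξ := by
    rw [hπ.map_mul v (Pmat X) (cuElem_all hcc _) (cuElem_all hcc _)]; rfl
  have h2 : π (matMul v (matStar v)) (π (Pmat X) ξ)
      = π (matMul (matMul v (matStar v)) (Pmat X)) ξ := by
    rw [hπ.map_mul (matMul v (matStar v)) (Pmat X) (cuElem_all hcc _)
      (cuElem_all hcc _)]; rfl
  rw [h1, h2, matMul_PT_Pmat hv]

open ContinuousLinearMap in
lemma adjoint_piP (hcc : ∀ x y : X, edist x y < ⊤) (hπ : IsRepresentation π) :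
    adjoint (π (Pmat X)) = π (Pmat X) := by
  rw [← hπ.map_star _ (cuElem_all hcc _), matStar_Pmat]

open ContinuousLinearMap in
lemma piP_orth (hcc : ∀ x y : X, edist x y < ⊤) (hπ : IsRepresentation π)
    (ξ : H) : ξ - π (Pmat X) ξ ∈ (invariantSubmodule π)ᗮ := by
  rw [Submodule.mem_orthogonal]
  intro η hη
  rw [inner_sub_right]
  have : (inner ℂ η (π (Pmat X) ξ) : ℂ) = inner ℂ η ξ := by
    rw [← adjoint_inner_left, adjoint_piP hcc hπ, piP_fix hcc hπ hη]
  rw [this, sub_self]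

open ContinuousLinearMap in
lemma piP_apply_eq_zero (hcc : ∀ x y : X, edist x y < ⊤) (hπ : IsRepresentation π)
    {ξ : H} (hξ : ξ ∈ (invariantSubmodule π)ᗮ) : π (Pmat X) ξ = 0 := by
  set A := π (Pmat X) with hA
  have hmem := piP_mem_invariant hcc hπ ξ
  have h0 : (inner ℂ (A ξ) ξ : ℂ) = 0 :=
    (Submodule.mem_orthogonal _ ξ).mp hξ _ hmem
  have h0' : (inner ℂ ξ (A ξ) : ℂ) = 0 := by
    rw [← inner_conj_symm, h0, map_zero]
  have hAA : A (A ξ) = A ξ := by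
    have : A * A = A := by
      rw [hA, ← hπ.map_mul (Pmat X) (Pmat X) (cuElem_all hcc _) (cuElem_all hcc _),
        matMul_Pmat_Pmat]
    have := congrArg (fun T => T ξ) this
    simpa [ContinuousLinearMap.mul_apply] using this
  have hz : (inner ℂ (A ξ) (A ξ) : ℂ) = 0 := by
    calc (inner ℂ (A ξ) (A ξ) : ℂ) = inner ℂ ξ (adjoint A (A ξ)) :=
          (adjoint_inner_right A ξ (A ξ)).symm
      _ = inner ℂ ξ (A (A ξ)) := by rw [hA, adjoint_piP hcc hπ]
      _ = inner ℂ ξ (A ξ) := by rw [hAA]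
      _ = 0 := h0'
  exact inner_self_eq_zero.mp hz

end HilbLemmas
section ChainLemmas

variable {X : Type*} [EMetricSpace X] [Fintype X] [Nonempty X]
variable {H : Type*} [NormedAddCommGroup H] [InnerProductSpace ℂ H] [CompleteSpace H]
variable {π : (X → X → ℂ) → (H →L[ℂ] H)}

lemma defect_chain (hcc : ∀ x y : X, edist x y < ⊤) (hπ : IsRepresentation π)
    (ξ : H) {E : Set (X × X)} {r : ℝ}
    (hedge : ∀ a b : X, (a, b) ∈ E → ‖π (elem a b) ξ - π (elem a a) ξ‖ ≤ r) :
    ∀ k : ℕ, ∀ a b : X, (a, b) ∈ compPow E k →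
      ‖π (elem a b) ξ - π (elem a a) ξ‖ ≤ (k + 1) * r := by
  intro k
  induction k with
  | zero =>
    intro a b hab
    simpa using hedge a b hab
  | succ k ih =>
    intro a b hab
    obtain ⟨z, haz, hzb⟩ := hab
    have m1 : π (elem a z) (π (elem z b) ξ) = π (elem a b) ξ := by
      rw [← ContinuousLinearMap.mul_apply,
        ← hπ.map_mul (elem a z) (elem z b) (cuElem_all hcc _) (cuElem_all hcc _),
        matMul_elem, if_pos rfl]
    have m2 : π (elem a z) (π (elem z z) ξ) = π (elem a z) ξ := by
      rw [← ContinuousLinearMap.mul_apply,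
        ← hπ.map_mul (elem a z) (elem z z) (cuElem_all hcc _) (cuElem_all hcc _),
        matMul_elem, if_pos rfl]
    have key : π (elem a b) ξ - π (elem a a) ξ
        = π (elem a z) (π (elem z b) ξ - π (elem z z) ξ)
          + (π (elem a z) ξ - π (elem a a) ξ) := by
      rw [map_sub, m1, m2]
      abel
    rw [key]
    calc ‖π (elem a z) (π (elem z b) ξ - π (elem z z) ξ)
          + (π (elem a z) ξ - π (elem a a) ξ)‖
        ≤ ‖π (elem a z) (π (elem z b) ξ - π (elem z z) ξ)‖
          + ‖π (elem a z) ξ - π (elem a a) ξ‖ := norm_add_le _ _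
      _ ≤ ((k + 1) * r) + r := by
          refine add_le_add ?_ (hedge a z haz)
          exact (norm_pi_elem_apply_le hcc hπ a z _).trans (ih z b hzb)
      _ = ((k : ℝ) + 1 + 1) * r := by ring
      _ = ((k + 1 : ℕ) + 1) * r := by push_cast; ring

lemma xi_eq_smul_sum (hcc : ∀ x y : X, edist x y < ⊤) (hπ : IsRepresentation π)
    (ξ : H) : ξ = ((Nat.card X : ℂ))⁻¹ • ∑ a : X, ∑ b : X, π (elem a a) ξ := by
  have hn : (Nat.card X : ℂ) ≠ 0 := natCard_ne_zero'
  have h1 : ∀ a : X, ∑ _b : X, π (elem a a) ξ = (Nat.card X : ℂ) • π (elem a a) ξ := by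
    intro a
    rw [Finset.sum_const, Finset.card_univ, ← Nat.card_eq_fintype_card,
      ← Nat.cast_smul_eq_nsmul ℂ]
  calc ξ = ∑ a : X, π (elem a a) ξ := (sum_diag_apply hcc hπ ξ).symm
    _ = ((Nat.card X : ℂ))⁻¹ • ∑ a : X, (Nat.card X : ℂ) • π (elem a a) ξ := by
        rw [Finset.smul_sum]
        refine (Finset.sum_congr rfl fun a _ => ?_).symm
        rw [smul_smul, inv_mul_cancel₀ hn, one_smul]
    _ = ((Nat.card X : ℂ))⁻¹ • ∑ a : X, ∑ _b : X, π (elem a a) ξ := by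
        rw [Finset.sum_congr rfl fun a _ => h1 a]

end ChainLemmas

lemma hasT {X : Type*} [EMetricSpace X] [Finite X] [Nonempty X]
    (hcc : ∀ x y : X, edist x y < ⊤) : HasPropertyT X := by
  haveI : Fintype X := Fintype.ofFinite X
  intro E hE
  obtain ⟨n₀, hn₀⟩ := hE.2 Set.univ (controlled_of_finite hcc _)
  set N : ℕ := Nat.card X with hN
  have hNpos : (0 : ℝ) < N := by
    have := Nat.card_pos (α := X)
    exact_mod_cast this
  have hden : (0 : ℝ) < 2 * ((n₀ : ℝ) + 1) * N :=
    mul_pos (mul_pos two_pos (by positivity)) hNpos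
  refine ⟨(2 * ((n₀ : ℝ) + 1) * N)⁻¹, inv_pos.mpr hden, ?_⟩
  intro H _ _ _ π hπ ξ hξ
  set c : ℝ := (2 * ((n₀ : ℝ) + 1) * N)⁻¹ with hc
  by_cases hz : ξ = 0
  · refine ⟨0, isPT_zero, ?_, ?_⟩
    · intro p hp
      simp [matSupport] at hp
    · simp [hz]
  · by_contra hcon
    push_neg at hcon
    have hξpos : (0 : ℝ) < ‖ξ‖ := norm_pos_iff.mpr hz
    have hedge : ∀ a b : X, (a, b) ∈ E →
        ‖π (elem a b) ξ - π (elem a a) ξ‖ ≤ c * ‖ξ‖ := by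
      intro a b hab
      have h := hcon (elem a b) (isPT_elem hcc a b)
        ((matSupport_elem a b).trans (Set.singleton_subset_iff.mpr hab))
      rw [matStar_elem, matMul_elem, if_pos rfl] at h
      exact h.le
    have hchain := defect_chain hcc hπ ξ hedge n₀
    have hP0 : π (Pmat X) ξ = 0 := piP_apply_eq_zero hcc hπ hξ
    have e1 : π (Pmat X) ξ = ((N : ℂ))⁻¹ • ∑ a : X, ∑ b : X, π (elem a b) ξ := by
      rw [piP_eq hcc hπ]
      simp only [ContinuousLinearMap.smul_apply, ContinuousLinearMap.sum_apply, hN]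
    have hsplit : ξ = ((N : ℂ))⁻¹ •
        ∑ a : X, ∑ b : X, (π (elem a a) ξ - π (elem a b) ξ) := by
      calc ξ = ξ - π (Pmat X) ξ := by rw [hP0, sub_zero]
        _ = ((N : ℂ))⁻¹ • ∑ a : X, ∑ b : X, π (elem a a) ξ
            - ((N : ℂ))⁻¹ • ∑ a : X, ∑ b : X, π (elem a b) ξ := by
            rw [← xi_eq_smul_sum hcc hπ ξ, ← e1]
        _ = ((N : ℂ))⁻¹ • ∑ a : X, ∑ b : X, (π (elem a a) ξ - π (elem a b) ξ) := by
            rw [← smul_sub]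
            congr 1
            rw [← Finset.sum_sub_distrib]
            exact Finset.sum_congr rfl fun a _ => by rw [← Finset.sum_sub_distrib]
    have hbound : ‖ξ‖ ≤ (N : ℝ)⁻¹ * ((N : ℝ) * ((N : ℝ) *
        (((n₀ : ℝ) + 1) * (c * ‖ξ‖)))) := by
      calc ‖ξ‖ = ‖((N : ℂ))⁻¹ • ∑ a : X, ∑ b : X,
            (π (elem a a) ξ - π (elem a b) ξ)‖ := by rw [← hsplit]
        _ = (N : ℝ)⁻¹ * ‖∑ a : X, ∑ b : X, (π (elem a a) ξ - π (elem a b) ξ)‖ := by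
            rw [norm_smul, norm_inv, Complex.norm_natCast]
        _ ≤ (N : ℝ)⁻¹ * ((N : ℝ) * ((N : ℝ) * (((n₀ : ℝ) + 1) * (c * ‖ξ‖)))) := by
            refine mul_le_mul_of_nonneg_left ?_ (by positivity)
            calc ‖∑ a : X, ∑ b : X, (π (elem a a) ξ - π (elem a b) ξ)‖
                ≤ ∑ a : X, ‖∑ b : X, (π (elem a a) ξ - π (elem a b) ξ)‖ :=
                  norm_sum_le _ _
              _ ≤ ∑ _a : X, ∑ _b : X, (((n₀ : ℝ) + 1) * (c * ‖ξ‖)) := by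
                  refine Finset.sum_le_sum fun a _ => ?_
                  calc ‖∑ b : X, (π (elem a a) ξ - π (elem a b) ξ)‖
                      ≤ ∑ b : X, ‖π (elem a a) ξ - π (elem a b) ξ‖ := norm_sum_le _ _
                    _ ≤ ∑ _b : X, (((n₀ : ℝ) + 1) * (c * ‖ξ‖)) := by
                        refine Finset.sum_le_sum fun b _ => ?_
                        rw [norm_sub_rev]
                        have := hchain a b (hn₀ (Set.mem_univ (a, b)))
                        push_cast at this ⊢
                        linarith
              _ = (N : ℝ) * ((N : ℝ) * (((n₀ : ℝ) + 1) * (c * ‖ξ‖))) := by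
                  rw [Finset.sum_const, Finset.sum_const, Finset.card_univ,
                    ← Nat.card_eq_fintype_card, ← hN]
                  ring
    rw [hc] at hbound
    have hNne : (N : ℝ) ≠ 0 := ne_of_gt hNpos
    have : ‖ξ‖ ≤ ‖ξ‖ / 2 := by
      calc ‖ξ‖ ≤ (N : ℝ)⁻¹ * ((N : ℝ) * ((N : ℝ) *
            (((n₀ : ℝ) + 1) * ((2 * ((n₀ : ℝ) + 1) * N)⁻¹ * ‖ξ‖)))) := hbound
        _ = ‖ξ‖ / 2 := by
            field_simp
    linarith

/-- A finite nonempty coarsely connected metric space has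
Property (T), and the matrix with all entries `1/|X|` maps, under every
representation `π`, to the orthogonal projection onto `H^π`. -/
theorem statement3 {X : Type*} [EMetricSpace X] [Finite X] [Nonempty X]
    (hcc : ∀ x y : X, edist x y < ⊤) :
    HasPropertyT X ∧
      ∀ (H : Type) [NormedAddCommGroup H] [InnerProductSpace ℂ H] [CompleteSpace H]
        (π : (X → X → ℂ) → (H →L[ℂ] H)), IsRepresentation π →
        IsOrthoProjOnto (π (fun _ _ => ((Nat.card X : ℂ))⁻¹)) (invariantSubmodule π) := by
  haveI : Fintype X := Fintype.ofFinite X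
  refine ⟨hasT hcc, ?_⟩
  intro H _ _ _ π hπ ξ
  exact ⟨piP_mem_invariant hcc hπ ξ, piP_orth hcc hπ ξ⟩

end GeomPropT
end
end
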